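/- arXiv:1907.07650 — 3 statements merged into one kernel-verified Lean document; each statement's English description precedes it below -/
import Mathlib

section
/- Let T be a tree and v a vertex belonging to the N-forest F_N(T) (i.e., v ∉ N[Supp(T)]). Then there exist maximum independent sets I_1 and I_2 of T with v ∈ I_1 and v ∉ I_2. -/
open SimpleGraph Matrix

attribute [local instance] Classical.propDecidable

noncomputable section

variable {V : Type*}

/-- A graph is singular if its adjacency matrix (over ℝ) has nontrivial kernel. -/
def IsSingular [Fintype V] (G : SimpleGraph V) : Prop :=
  ∃ x : V → ℝ, x ≠ 0 ∧ G.adjMatrix ℝ *ᵥ x = 0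

/-- The support of the null space of the adjacency matrix. -/
def nullSupp [Fintype V] (G : SimpleGraph V) : Set V :=
  {v | ∃ x : V → ℝ, G.adjMatrix ℝ *ᵥ x = 0 ∧ x v ≠ 0}

/-- The core: all neighbours of supported vertices. -/
def core [Fintype V] (G : SimpleGraph V) : Set V :=
  ⋃ v ∈ nullSupp G, G.neighborSet v

/-- Vertex set of the N-forest: complement of the closed neighbourhood of the support. -/
def fnVerts [Fintype V] (G : SimpleGraph V) : Set V :=
  (nullSupp G ∪ core G)ᶜ

/-- A matching as a set of pairwise disjoint edges of `G`. -/
def IsMatchingSet (G : SimpleGraph V) (M : Set (Sym2 V)) : Prop :=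
  M ⊆ G.edgeSet ∧ M.Pairwise fun e f => ∀ v : V, ¬(v ∈ e ∧ v ∈ f)

/-- `M` saturates `v`. -/
def Saturates (M : Set (Sym2 V)) (v : V) : Prop := ∃ e ∈ M, v ∈ e

/-- A perfect matching saturates every vertex. -/
def IsPerfectMatchingSet (G : SimpleGraph V) (M : Set (Sym2 V)) : Prop :=
  IsMatchingSet G M ∧ ∀ v : V, Saturates M v

/-- Matching number. -/
def matchNum [Fintype V] (G : SimpleGraph V) : ℕ :=
  sSup {n | ∃ M : Set (Sym2 V), IsMatchingSet G M ∧ M.ncard = n}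

/-- Maximum matchings. -/
def IsMaxMatching [Fintype V] (G : SimpleGraph V) (M : Set (Sym2 V)) : Prop :=
  IsMatchingSet G M ∧ M.ncard = matchNum G

/-- Independent set of vertices. -/
def IsIndepSet (G : SimpleGraph V) (I : Set V) : Prop :=
  I.Pairwise fun a b => ¬ G.Adj a b

/-- Independence number. -/
def indepNum [Fintype V] (G : SimpleGraph V) : ℕ :=
  sSup {n | ∃ I : Set V, _root_.IsIndepSet G I ∧ I.ncard = n}

/-- Maximum independent sets. -/
def IsMaxIndep [Fintype V] (G : SimpleGraph V) (I : Set V) : Prop :=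
  _root_.IsIndepSet G I ∧ I.ncard = _root_.indepNum G

/-- The graph `G` with all vertices in `S` deleted (kept as isolated vertices). -/
def avoid (G : SimpleGraph V) (S : Set V) : SimpleGraph V where
  Adj a b := G.Adj a b ∧ a ∉ S ∧ b ∉ S
  symm := ⟨fun a b h => ⟨h.1.symm, h.2.2, h.2.1⟩⟩
  loopless := ⟨fun a h => G.loopless.irrefl a h.1⟩

/-- `G` is unicyclic: connected with as many edges as vertices. -/
def IsUnicyclic [Fintype V] (G : SimpleGraph V) : Prop :=
  G.Connected ∧ G.edgeFinset.card = Fintype.card V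

/-- `C` is the vertex set of the (unique) cycle of `G`:
the induced subgraph on `C` is connected and 2-regular. -/
def IsCycleVerts [Fintype V] (G : SimpleGraph V) (C : Set V) : Prop :=
  C.Nonempty ∧ (G.induce C).Connected ∧ ∀ v : C, (G.induce C).degree v = 2

/-- Vertices of the pendant tree of `G` at the cycle vertex `v`: all vertices
reachable from `v` after deleting the other cycle vertices. -/
def pendantVerts (G : SimpleGraph V) (C : Set V) (v : V) : Set V :=
  {u | (avoid G (C \ {v})).Reachable v u}

lemma mem_pendantVerts_self (G : SimpleGraph V) (C : Set V) (v : V) :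
    v ∈ pendantVerts G C v := Reachable.refl v

/-- The pendant tree of `G` at `v` (as an induced subgraph). -/
def pendantTree (G : SimpleGraph V) (C : Set V) (v : V) :
    SimpleGraph (pendantVerts G C v) := G.induce (pendantVerts G C v)

/-- The rest of the graph, `G − G{v}`. -/
def pendantRest (G : SimpleGraph V) (C : Set V) (v : V) :
    SimpleGraph ((pendantVerts G C v)ᶜ : Set V) := G.induce (pendantVerts G C v)ᶜ

/-- `v` is matched in a graph `H`: every maximum matching of `H` saturates `v`. -/
def MatchedIn {W : Type*} [Fintype W] (H : SimpleGraph W) (w : W) : Prop :=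
  ∀ M : Set (Sym2 W), IsMaxMatching H M → Saturates M w

/-- A unicyclic graph is of Type I if some cycle vertex is matched in its pendant tree. -/
def TypeI [Fintype V] (G : SimpleGraph V) (C : Set V) : Prop :=
  ∃ v ∈ C, MatchedIn (pendantTree G C v) ⟨v, mem_pendantVerts_self G C v⟩

/-- Type II: every cycle vertex is missed by some maximum matching of its pendant tree. -/
def TypeII [Fintype V] (G : SimpleGraph V) (C : Set V) : Prop :=
  ∀ v ∈ C, ¬ MatchedIn (pendantTree G C v) ⟨v, mem_pendantVerts_self G C v⟩

end

noncomputable section Aux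
set_option linter.unusedVariables false
set_option linter.unusedSectionVars false
open Module Submodule

variable {V : Type*} [Fintype V]

lemma isMatchingSet_empty (G : SimpleGraph V) : IsMatchingSet G (∅ : Set (Sym2 V)) :=
  ⟨Set.empty_subset _, Set.pairwise_empty _⟩

lemma matchNum_bddAbove (G : SimpleGraph V) :
    BddAbove {n | ∃ M : Set (Sym2 V), IsMatchingSet G M ∧ M.ncard = n} := by
  refine ⟨(Set.univ : Set (Sym2 V)).ncard, ?_⟩
  rintro n ⟨M, _, rfl⟩
  exact Set.ncard_le_ncard (Set.subset_univ M) Set.finite_univ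

lemma exists_maxMatching (G : SimpleGraph V) :
    ∃ M : Set (Sym2 V), IsMatchingSet G M ∧ M.ncard = matchNum G := by
  have h0 : (0:ℕ) ∈ {n | ∃ M : Set (Sym2 V), IsMatchingSet G M ∧ M.ncard = n} :=
    ⟨∅, isMatchingSet_empty G, Set.ncard_empty _⟩
  exact Nat.sSup_mem ⟨0, h0⟩ (matchNum_bddAbove G)

lemma le_matchNum {G : SimpleGraph V} {M : Set (Sym2 V)} (h : IsMatchingSet G M) :
    M.ncard ≤ matchNum G :=
  le_csSup (matchNum_bddAbove G) ⟨M, h, rfl⟩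

lemma indepNum_bddAbove (G : SimpleGraph V) :
    BddAbove {n | ∃ I : Set V, _root_.IsIndepSet G I ∧ I.ncard = n} := by
  refine ⟨(Set.univ : Set V).ncard, ?_⟩
  rintro n ⟨I, _, rfl⟩
  exact Set.ncard_le_ncard (Set.subset_univ I) Set.finite_univ

lemma exists_maxIndep (G : SimpleGraph V) :
    ∃ I : Set V, _root_.IsIndepSet G I ∧ I.ncard = _root_.indepNum G := by
  have h0 : (0:ℕ) ∈ {n | ∃ I : Set V, _root_.IsIndepSet G I ∧ I.ncard = n} :=
    ⟨∅, Set.pairwise_empty _, Set.ncard_empty _⟩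
  exact Nat.sSup_mem ⟨0, h0⟩ (indepNum_bddAbove G)

lemma le_indepNum {G : SimpleGraph V} {I : Set V} (h : _root_.IsIndepSet G I) :
    I.ncard ≤ _root_.indepNum G :=
  le_csSup (indepNum_bddAbove G) ⟨I, h, rfl⟩

lemma avoid_le (G : SimpleGraph V) (S : Set V) : avoid G S ≤ G := fun _ _ h => h.1

lemma matchNum_le_of_le {G H : SimpleGraph V} (h : H ≤ G) : matchNum H ≤ matchNum G := by
  obtain ⟨M, hM, hcard⟩ := exists_maxMatching H
  rw [← hcard]
  exact le_matchNum ⟨fun e he => SimpleGraph.edgeSet_mono h (hM.1 he), hM.2⟩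

lemma isAcyclic_of_le {G H : SimpleGraph V} (hG : G.IsAcyclic) (h : H ≤ G) : H.IsAcyclic := by
  intro v c hc
  exact hG (c.mapLe h) (hc.mapLe h)

end Aux
noncomputable section Aux2
set_option linter.unusedVariables false
set_option linter.unusedSectionVars false
open SimpleGraph

variable {V : Type*} [Fintype V]

lemma exists_leaf {G : SimpleGraph V} (hG : G.IsAcyclic) (he : G.edgeSet.Nonempty) :
    ∃ ℓ p : V, G.Adj ℓ p ∧ ∀ w : V, G.Adj ℓ w → w = p := by
  classical
  set S : Set ℕ := {n | ∃ a b : V, ∃ w : G.Walk a b, w.IsPath ∧ w.length = n} with hS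
  have hbdd : BddAbove S := by
    refine ⟨Fintype.card V, ?_⟩
    rintro n ⟨a, b, w, hw, rfl⟩
    exact le_of_lt hw.length_lt
  have h1 : (1 : ℕ) ∈ S := by
    obtain ⟨e, heG⟩ := he
    induction e using Sym2.ind with
    | _ a b =>
      rw [SimpleGraph.mem_edgeSet] at heG
      exact ⟨a, b, Walk.cons heG Walk.nil, (Path.singleton heG).2, rfl⟩
  have hmem : sSup S ∈ S := Nat.sSup_mem ⟨1, h1⟩ hbdd
  obtain ⟨a, b, p, hp, hlen⟩ := hmem
  have h1le : 1 ≤ sSup S := le_csSup hbdd h1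
  cases p with
  | nil => simp at hlen; omega
  | cons hac q =>
    rename_i c
    refine ⟨a, c, hac, ?_⟩
    intro w haw
    by_contra hwc
    have hqpath : q.IsPath ∧ a ∉ q.support := by
      rw [Walk.cons_isPath_iff] at hp; exact hp
    by_cases hws : w ∈ (Walk.cons hac q).support
    · -- build a cycle
      have hp' := hp
      set P : G.Walk a w := (Walk.cons hac q).takeUntil w hws with hP
      have hPpath : P.IsPath := hp.takeUntil hws
      have hedge : s(a, w) ∉ P.reverse.edges := by
        rw [Walk.edges_reverse, List.mem_reverse]
        intro hmem'
        have : s(a,w) ∈ (Walk.cons hac q).edges :=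
          Walk.edges_takeUntil_subset _ hws hmem'
        rw [Walk.edges_cons] at this
        rcases List.mem_cons.mp this with h' | h'
        · rw [Sym2.eq_iff] at h'
          rcases h' with ⟨_, rfl⟩ | ⟨h1', h2'⟩
          · exact hwc rfl
          · exact G.loopless.irrefl c (h1' ▸ hac)
        · exact hqpath.2 (Walk.fst_mem_support_of_mem_edges q h')
      have hcyc := Path.cons_isCycle ⟨P.reverse, hPpath.reverse⟩ haw hedge
      exact hG _ hcyc
    · -- extend the path
      have hlong : ((Walk.cons hac q).cons haw.symm).IsPath := by
        rw [Walk.cons_isPath_iff]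
        exact ⟨hp, hws⟩
      have : (sSup S) + 1 ∈ S := ⟨w, b, _, hlong, by simp [hlen]⟩
      have := le_csSup hbdd this
      omega

end Aux2
noncomputable section Aux3
set_option linter.unusedVariables false
set_option linter.unusedSectionVars false
open SimpleGraph

variable {V : Type*} [Fintype V]

lemma avoid_edge_not_mem {G : SimpleGraph V} {S : Set V} {e : Sym2 V}
    (he : e ∈ (avoid G S).edgeSet) {x : V} (hx : x ∈ e) : x ∉ S := by
  induction e using Sym2.ind with
  | _ a b =>
    rw [SimpleGraph.mem_edgeSet] at he
    rcases Sym2.mem_iff.mp hx with rfl | rfl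
    · exact he.2.1
    · exact he.2.2

lemma mem_avoid_edgeSet {G : SimpleGraph V} {S : Set V} {e : Sym2 V}
    (he : e ∈ G.edgeSet) (h : ∀ x ∈ e, x ∉ S) : e ∈ (avoid G S).edgeSet := by
  induction e using Sym2.ind with
  | _ a b =>
    rw [SimpleGraph.mem_edgeSet] at he ⊢
    exact ⟨he, h a (Sym2.mem_mk_left a b), h b (Sym2.mem_mk_right a b)⟩

-- an edge of a matching containing the leaf ℓ must be s(ℓ,p)
lemma leaf_edge_eq {G : SimpleGraph V} {ℓ p : V}
    (hleaf : ∀ w : V, G.Adj ℓ w → w = p) {e : Sym2 V} (he : e ∈ G.edgeSet)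
    (hℓ : ℓ ∈ e) : e = s(ℓ, p) := by
  obtain ⟨x, rfl⟩ := Sym2.mem_iff_exists.mp hℓ
  rw [SimpleGraph.mem_edgeSet] at he
  rw [hleaf x he]

lemma matchNum_leaf_step {G : SimpleGraph V} {ℓ p : V} (hadj : G.Adj ℓ p)
    (hleaf : ∀ w : V, G.Adj ℓ w → w = p) :
    matchNum G = matchNum (avoid G {ℓ, p}) + 1 := by
  set G' := avoid G {ℓ, p} with hG'
  have hle : matchNum G' + 1 ≤ matchNum G := by
    obtain ⟨M', hM', hcard'⟩ := exists_maxMatching G'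
    have hnot : s(ℓ, p) ∉ M' := by
      intro hmem
      exact avoid_edge_not_mem (hM'.1 hmem) (Sym2.mem_mk_left ℓ p) (Set.mem_insert _ _)
    have hmatch : IsMatchingSet G (insert s(ℓ, p) M') := by
      constructor
      · rintro e (rfl | he)
        · exact hadj
        · exact SimpleGraph.edgeSet_mono (avoid_le G _) (hM'.1 he)
      · intro e he f hf hef
        rcases he with rfl | he <;> rcases hf with rfl | hf
        · exact absurd rfl hef
        · intro x ⟨hx1, hx2⟩
          have := avoid_edge_not_mem (hM'.1 hf) hx2
          rcases Sym2.mem_iff.mp hx1 with rfl | rfl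
          · exact this (Set.mem_insert _ _)
          · exact this (Set.mem_insert_of_mem _ rfl)
        · intro x ⟨hx1, hx2⟩
          have := avoid_edge_not_mem (hM'.1 he) hx1
          rcases Sym2.mem_iff.mp hx2 with rfl | rfl
          · exact this (Set.mem_insert _ _)
          · exact this (Set.mem_insert_of_mem _ rfl)
        · exact hM'.2 he hf hef
    have := le_matchNum hmatch
    rwa [Set.ncard_insert_of_notMem hnot (Set.toFinite M'), hcard'] at this
  have hge : matchNum G ≤ matchNum G' + 1 := by
    obtain ⟨M, hM, hcard⟩ := exists_maxMatching G
    set M'' : Set (Sym2 V) := {e ∈ M | ℓ ∉ e ∧ p ∉ e} with hM''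
    have hsub : M'' ⊆ M := Set.sep_subset _ _
    have hmatch'' : IsMatchingSet G' M'' := by
      constructor
      · rintro e ⟨heM, heℓ, hep⟩
        refine mem_avoid_edgeSet (hM.1 heM) ?_
        intro x hx hxS
        rcases hxS with rfl | rfl
        · exact heℓ hx
        · exact hep hx
      · exact fun e he f hf hef => hM.2 (hsub he) (hsub hf) hef
    have hdiff : (M \ M'').ncard ≤ 1 := by
      rw [Set.ncard_le_one_iff (Set.toFinite _)]
      rintro e f ⟨heM, he2⟩ ⟨hfM, hf2⟩
      have hPe : p ∈ e := by
        by_cases h : ℓ ∈ e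
        · have := leaf_edge_eq hleaf (hM.1 heM) h
          rw [this]; exact Sym2.mem_mk_right ℓ p
        · by_contra hp
          exact he2 ⟨heM, h, hp⟩
      have hPf : p ∈ f := by
        by_cases h : ℓ ∈ f
        · have := leaf_edge_eq hleaf (hM.1 hfM) h
          rw [this]; exact Sym2.mem_mk_right ℓ p
        · by_contra hp
          exact hf2 ⟨hfM, h, hp⟩
      by_contra hef
      exact hM.2 heM hfM hef p ⟨hPe, hPf⟩
    have hcount : M.ncard ≤ M''.ncard + 1 := by
      have h1 : (M \ M'').ncard = M.ncard - M''.ncard := Set.ncard_diff hsub (Set.toFinite _)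
      have h2 : M''.ncard ≤ M.ncard := Set.ncard_le_ncard hsub (Set.toFinite _)
      omega
    calc matchNum G = M.ncard := hcard.symm
      _ ≤ M''.ncard + 1 := hcount
      _ ≤ matchNum G' + 1 := by exact Nat.add_le_add_right (le_matchNum hmatch'') 1
  omega

lemma indepNum_leaf_step {G : SimpleGraph V} {ℓ p : V} (hadj : G.Adj ℓ p)
    (hleaf : ∀ w : V, G.Adj ℓ w → w = p) :
    _root_.indepNum G + 1 = _root_.indepNum (avoid G {ℓ, p}) := by
  set G' := avoid G {ℓ, p} with hG'
  have hne : ℓ ≠ p := G.ne_of_adj hadj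
  have h1 : _root_.indepNum G + 1 ≤ _root_.indepNum G' := by
    obtain ⟨I, hI, hcard⟩ := exists_maxIndep G
    set J : Set V := insert ℓ (insert p (I \ {ℓ, p})) with hJ
    have hJindep : _root_.IsIndepSet G' J := by
      intro a ha b hb hab hAdj
      obtain ⟨hGadj, haS, hbS⟩ := hAdj
      have haI : a ∈ I := by
        rcases ha with rfl | rfl | h
        · exact absurd (by simp) haS
        · exact absurd (by simp) haS
        · exact h.1
      have hbI : b ∈ I := by
        rcases hb with rfl | rfl | h
        · exact absurd (by simp) hbS
        · exact absurd (by simp) hbS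
        · exact h.1
      exact hI haI hbI hab hGadj
    have hinter : (I ∩ {ℓ, p}).ncard ≤ 1 := by
      rw [Set.ncard_le_one_iff (Set.toFinite _)]
      rintro x y ⟨hxI, hxS⟩ ⟨hyI, hyS⟩
      by_contra hxy
      have hℓp : ℓ ∈ I ∧ p ∈ I := by
        rcases hxS with rfl | rfl <;> rcases hyS with rfl | rfl
        · exact absurd rfl hxy
        · exact ⟨hxI, hyI⟩
        · exact ⟨hyI, hxI⟩
        · exact absurd rfl hxy
      exact hI hℓp.1 hℓp.2 hne hadj
    have hd : (I \ {ℓ, p}).ncard = I.ncard - (I ∩ {ℓ, p}).ncard := by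
      rw [← Set.diff_self_inter]
      exact Set.ncard_diff Set.inter_subset_left (Set.toFinite _)
    have hp' : p ∉ I \ ({ℓ, p} : Set V) := by rintro ⟨_, h⟩; exact h (by simp)
    have hℓ' : ℓ ∉ insert p (I \ ({ℓ, p} : Set V)) := by
      rintro (rfl | ⟨_, h⟩)
      · exact hne rfl
      · exact h (by simp)
    have hJcard : J.ncard = (I \ {ℓ, p}).ncard + 2 := by
      rw [hJ, Set.ncard_insert_of_notMem hℓ' (Set.toFinite _),
        Set.ncard_insert_of_notMem hp' (Set.toFinite _)]
    have := le_indepNum hJindep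
    have hIle : I.ncard ≤ _root_.indepNum G := le_indepNum hI
    omega
  have h2 : _root_.indepNum G' ≤ _root_.indepNum G + 1 := by
    obtain ⟨I', hI', hcard'⟩ := exists_maxIndep G'
    set J : Set V := insert ℓ (I' \ {ℓ, p}) with hJ
    have hJindep : _root_.IsIndepSet G J := by
      intro a ha b hb hab hGadj
      rcases ha with rfl | ⟨haI, haS⟩
      · rcases hb with rfl | ⟨hbI, hbS⟩
        · exact hab rfl
        · exact hbS (by rw [hleaf b hGadj]; simp)
      · rcases hb with rfl | ⟨hbI, hbS⟩
        · exact haS (by rw [hleaf a hGadj.symm]; simp)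
        · exact hI' haI hbI hab ⟨hGadj, haS, hbS⟩
    have hd : (I' \ {ℓ, p}).ncard = I'.ncard - (I' ∩ {ℓ, p}).ncard := by
      rw [← Set.diff_self_inter]
      exact Set.ncard_diff Set.inter_subset_left (Set.toFinite _)
    have hinter : (I' ∩ {ℓ, p}).ncard ≤ 2 := by
      have h' : (I' ∩ {ℓ, p}).ncard ≤ ({ℓ, p} : Set V).ncard :=
        Set.ncard_le_ncard Set.inter_subset_right (Set.toFinite _)
      have : ({ℓ, p} : Set V).ncard = 2 := Set.ncard_pair hne
      omega
    have hℓ'' : ℓ ∉ I' \ ({ℓ, p} : Set V) := by rintro ⟨_, h⟩; exact h (by simp)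
    have hJcard : J.ncard = (I' \ {ℓ, p}).ncard + 1 := by
      rw [hJ, Set.ncard_insert_of_notMem hℓ'' (Set.toFinite _)]
    have := le_indepNum hJindep
    have hI'le : I'.ncard ≤ _root_.indepNum G' := le_indepNum hI'
    -- need lower bound on I'.ncard related: I' is max so I'.ncard = _root_.indepNum G'
    omega
  omega

end Aux3
noncomputable section Aux4
set_option linter.unusedVariables false
set_option linter.unusedSectionVars false
set_option synthInstance.maxHeartbeats 1000000
set_option maxHeartbeats 1000000
open SimpleGraph Matrix Module

variable {V : Type*} [Fintype V]

/-- nullity of a graph -/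
def nullity (G : SimpleGraph V) : ℕ :=
  Module.finrank ℝ (LinearMap.ker ((G.adjMatrix ℝ).mulVecLin))

lemma mem_nullKer_iff {G : SimpleGraph V} {x : V → ℝ} :
    x ∈ LinearMap.ker ((G.adjMatrix ℝ).mulVecLin) ↔ G.adjMatrix ℝ *ᵥ x = 0 := by
  rw [LinearMap.mem_ker, Matrix.mulVecLin_apply]

lemma avoid_nf_of_mem {G : SimpleGraph V} {S : Set V} {w : V} (hw : w ∈ S) :
    (avoid G S).neighborFinset w = ∅ := by
  ext u
  simp only [SimpleGraph.mem_neighborFinset, Finset.notMem_empty, iff_false]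
  intro h
  exact h.2.1 hw

lemma avoid_nf_of_not_mem {G : SimpleGraph V} {S : Set V} {w : V} (hw : w ∉ S) :
    (avoid G S).neighborFinset w = (G.neighborFinset w).filter (fun u => u ∉ S) := by
  ext u
  simp only [SimpleGraph.mem_neighborFinset, Finset.mem_filter]
  constructor
  · intro h; exact ⟨h.1, h.2.2⟩
  · intro h; exact ⟨h.1, hw, h.2⟩

lemma avoid_mulVec_mem {G : SimpleGraph V} {S : Set V} {w : V} (hw : w ∈ S) (x : V → ℝ) :
    ((avoid G S).adjMatrix ℝ *ᵥ x) w = 0 := by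
  rw [SimpleGraph.adjMatrix_mulVec_apply, avoid_nf_of_mem hw, Finset.sum_empty]

lemma avoid_mulVec_eq {G : SimpleGraph V} {S : Set V} {w : V} (hw : w ∉ S) {x : V → ℝ}
    (hz : ∀ u : V, G.Adj w u → u ∈ S → x u = 0) :
    ((avoid G S).adjMatrix ℝ *ᵥ x) w = (G.adjMatrix ℝ *ᵥ x) w := by
  rw [SimpleGraph.adjMatrix_mulVec_apply, SimpleGraph.adjMatrix_mulVec_apply,
    avoid_nf_of_not_mem hw]
  apply Finset.sum_subset (Finset.filter_subset _ _)
  intro u hu hnu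
  apply hz u ((SimpleGraph.mem_neighborFinset G w u).mp hu)
  by_contra hus
  exact hnu (Finset.mem_filter.mpr ⟨hu, hus⟩)

section LeafStep

variable {G : SimpleGraph V} {ℓ p : V}

lemma neighborFinset_leaf (hadj : G.Adj ℓ p) (hleaf : ∀ w : V, G.Adj ℓ w → w = p) :
    G.neighborFinset ℓ = {p} := by
  ext u
  simp only [SimpleGraph.mem_neighborFinset, Finset.mem_singleton]
  exact ⟨fun h => hleaf u h, fun h => h ▸ hadj⟩

lemma ker_e1 (hadj : G.Adj ℓ p) (hleaf : ∀ w : V, G.Adj ℓ w → w = p) {x : V → ℝ}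
    (hx : G.adjMatrix ℝ *ᵥ x = 0) : x p = 0 := by
  have := congrFun hx ℓ
  rwa [SimpleGraph.adjMatrix_mulVec_apply, neighborFinset_leaf hadj hleaf,
    Finset.sum_singleton, Pi.zero_apply] at this

lemma ker_e2 (hadj : G.Adj ℓ p) (hleaf : ∀ w : V, G.Adj ℓ w → w = p) {x : V → ℝ}
    (hx : G.adjMatrix ℝ *ᵥ x = 0) :
    x ℓ + ∑ z ∈ (G.neighborFinset p).erase ℓ, x z = 0 := by
  have h1 := congrFun hx p
  rw [SimpleGraph.adjMatrix_mulVec_apply, Pi.zero_apply] at h1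
  have h2 : ℓ ∈ G.neighborFinset p := by
    rw [SimpleGraph.mem_neighborFinset]; exact hadj.symm
  rw [← Finset.add_sum_erase _ x h2] at h1
  exact h1

lemma pair_zero (hadj : G.Adj ℓ p) (hleaf : ∀ w : V, G.Adj ℓ w → w = p)
    {x : V → ℝ} (hxp : x p = 0) {w : V} (hw : w ∉ ({ℓ, p} : Set V)) :
    ∀ u : V, G.Adj w u → u ∈ ({ℓ, p} : Set V) → x u = 0 := by
  intro u hu huS
  rcases huS with rfl | rfl
  · exfalso
    exact hw (by rw [hleaf w hu.symm]; exact Set.mem_insert_of_mem _ rfl)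
  · exact hxp

lemma ker_e3 (hadj : G.Adj ℓ p) (hleaf : ∀ w : V, G.Adj ℓ w → w = p) {x : V → ℝ}
    (hx : G.adjMatrix ℝ *ᵥ x = 0) : (avoid G {ℓ, p}).adjMatrix ℝ *ᵥ x = 0 := by
  funext w
  rw [Pi.zero_apply]
  by_cases hw : w ∈ ({ℓ, p} : Set V)
  · exact avoid_mulVec_mem hw x
  · rw [avoid_mulVec_eq hw (pair_zero hadj hleaf (ker_e1 hadj hleaf hx) hw), hx, Pi.zero_apply]

lemma ker_econv (hadj : G.Adj ℓ p) (hleaf : ∀ w : V, G.Adj ℓ w → w = p) {y : V → ℝ}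
    (hy : (avoid G {ℓ, p}).adjMatrix ℝ *ᵥ y = 0) (hyp : y p = 0)
    (hyl : y ℓ + ∑ z ∈ (G.neighborFinset p).erase ℓ, y z = 0) :
    G.adjMatrix ℝ *ᵥ y = 0 := by
  funext w
  rw [Pi.zero_apply]
  by_cases hwl : w = ℓ
  · subst hwl
    rw [SimpleGraph.adjMatrix_mulVec_apply, neighborFinset_leaf hadj hleaf,
      Finset.sum_singleton, hyp]
  · by_cases hwp : w = p
    · subst hwp
      rw [SimpleGraph.adjMatrix_mulVec_apply]
      have h2 : ℓ ∈ G.neighborFinset w := by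
        rw [SimpleGraph.mem_neighborFinset]; exact hadj.symm
      rw [← Finset.add_sum_erase _ y h2]
      exact hyl
    · have hw : w ∉ ({ℓ, p} : Set V) := by
        rintro (rfl | rfl)
        · exact hwl rfl
        · exact hwp rfl
      rw [← avoid_mulVec_eq hw (pair_zero hadj hleaf hyp hw), hy, Pi.zero_apply]

lemma ker_le_ker_avoid (hadj : G.Adj ℓ p) (hleaf : ∀ w : V, G.Adj ℓ w → w = p) :
    LinearMap.ker ((G.adjMatrix ℝ).mulVecLin)
      ≤ LinearMap.ker (((avoid G {ℓ, p}).adjMatrix ℝ).mulVecLin) := by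
  intro x hx
  rw [mem_nullKer_iff] at hx ⊢
  exact ker_e3 hadj hleaf hx

lemma single_mem_ker_avoid {S : Set V} {G : SimpleGraph V} {a : V} (ha : a ∈ S) :
    (Pi.single a 1 : V → ℝ) ∈ LinearMap.ker (((avoid G S).adjMatrix ℝ).mulVecLin) := by
  rw [mem_nullKer_iff]
  funext w
  rw [Pi.zero_apply, SimpleGraph.adjMatrix_mulVec_apply]
  apply Finset.sum_eq_zero
  intro u hu
  rw [SimpleGraph.mem_neighborFinset] at hu
  have hua : u ≠ a := by
    rintro rfl
    exact hu.2.2 ha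
  exact Pi.single_eq_of_ne hua 1

lemma nullity_leaf_step (hadj : G.Adj ℓ p) (hleaf : ∀ w : V, G.Adj ℓ w → w = p) :
    nullity (avoid G {ℓ, p}) = nullity G + 2 := by
  classical
  have hne : ℓ ≠ p := G.ne_of_adj hadj
  -- the projection map
  set π : LinearMap.ker (((avoid G {ℓ, p}).adjMatrix ℝ).mulVecLin) →ₗ[ℝ] ℝ × ℝ :=
    { toFun := fun y =>
        ((y : V → ℝ) ℓ + ∑ z ∈ (G.neighborFinset p).erase ℓ, (y : V → ℝ) z, (y : V → ℝ) p)
      map_add' := by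
        intro a b
        have key : ∀ f g : V → ℝ,
            ((f + g) ℓ + ∑ z ∈ (G.neighborFinset p).erase ℓ, (f + g) z, (f + g) p)
              = (f ℓ + ∑ z ∈ (G.neighborFinset p).erase ℓ, f z, f p)
                + (g ℓ + ∑ z ∈ (G.neighborFinset p).erase ℓ, g z, g p) := by
          intro f g
          rw [Prod.mk_add_mk, Prod.mk.injEq]
          refine ⟨?_, rfl⟩
          simp only [Pi.add_apply]
          rw [Finset.sum_add_distrib]
          ring
        exact key (a : V → ℝ) (b : V → ℝ)
      map_smul' := by
        intro c a
        have key : ∀ f : V → ℝ,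
            ((c • f) ℓ + ∑ z ∈ (G.neighborFinset p).erase ℓ, (c • f) z, (c • f) p)
              = c • (f ℓ + ∑ z ∈ (G.neighborFinset p).erase ℓ, f z, f p) := by
          intro f
          rw [Prod.smul_mk, Prod.mk.injEq]
          refine ⟨?_, rfl⟩
          simp only [Pi.smul_apply, smul_eq_mul]
          rw [mul_add, Finset.mul_sum]
        exact key (a : V → ℝ) } with hπ
  have hl : (Pi.single ℓ (1:ℝ) : V → ℝ)
      ∈ LinearMap.ker (((avoid G {ℓ, p}).adjMatrix ℝ).mulVecLin) :=
    single_mem_ker_avoid (Set.mem_insert _ _)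
  have hp : (Pi.single p (1:ℝ) : V → ℝ)
      ∈ LinearMap.ker (((avoid G {ℓ, p}).adjMatrix ℝ).mulVecLin) :=
    single_mem_ker_avoid (Set.mem_insert_of_mem _ rfl)
  have h1 : π ⟨_, hl⟩ = (1, 0) := by
    rw [hπ]
    simp only [LinearMap.coe_mk, AddHom.coe_mk]
    rw [Prod.mk.injEq]
    constructor
    · rw [Finset.sum_eq_zero, add_zero, Pi.single_eq_same]
      intro z hz
      exact Pi.single_eq_of_ne (Finset.ne_of_mem_erase hz) 1
    · exact Pi.single_eq_of_ne (Ne.symm hne) 1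
  have h2 : π ⟨_, hp⟩ = (0, 1) := by
    rw [hπ]
    simp only [LinearMap.coe_mk, AddHom.coe_mk]
    rw [Prod.mk.injEq]
    constructor
    · rw [Finset.sum_eq_zero, add_zero, Pi.single_eq_of_ne hne]
      intro z hz
      have hzp : z ≠ p := by
        intro h
        have h' := Finset.mem_of_mem_erase hz
        rw [h, SimpleGraph.mem_neighborFinset] at h'
        exact G.loopless.irrefl p h'
      exact Pi.single_eq_of_ne hzp 1
    · exact Pi.single_eq_same p 1
  have hrange : LinearMap.range π = ⊤ := by
    rw [LinearMap.range_eq_top]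
    rintro ⟨c1, c2⟩
    refine ⟨c1 • ⟨_, hl⟩ + c2 • ⟨_, hp⟩, ?_⟩
    rw [π.map_add, π.map_smul, π.map_smul, h1, h2]
    rw [Prod.smul_mk, Prod.smul_mk, Prod.mk_add_mk]
    simp
  have hle : LinearMap.ker ((G.adjMatrix ℝ).mulVecLin)
      ≤ LinearMap.ker (((avoid G {ℓ, p}).adjMatrix ℝ).mulVecLin) :=
    ker_le_ker_avoid hadj hleaf
  have hker : LinearMap.ker π
      = Submodule.comap (LinearMap.ker (((avoid G {ℓ, p}).adjMatrix ℝ).mulVecLin)).subtype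
          (LinearMap.ker ((G.adjMatrix ℝ).mulVecLin)) := by
    ext y
    simp only [LinearMap.mem_ker, Submodule.mem_comap, Submodule.coe_subtype]
    rw [hπ]
    simp only [LinearMap.coe_mk, AddHom.coe_mk, Prod.mk_eq_zero]
    constructor
    · intro h
      have hy := y.2
      rw [LinearMap.mem_ker, Matrix.mulVecLin_apply] at hy
      rw [Matrix.mulVecLin_apply]
      exact ker_econv hadj hleaf hy h.2 h.1
    · intro h
      rw [Matrix.mulVecLin_apply] at h
      exact ⟨ker_e2 hadj hleaf h, ker_e1 hadj hleaf h⟩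
  have hrn := LinearMap.finrank_range_add_finrank_ker π
  rw [hrange, hker] at hrn
  have hcomap : Module.finrank ℝ
      (Submodule.comap (LinearMap.ker (((avoid G {ℓ, p}).adjMatrix ℝ).mulVecLin)).subtype
        (LinearMap.ker ((G.adjMatrix ℝ).mulVecLin)))
      = Module.finrank ℝ (LinearMap.ker ((G.adjMatrix ℝ).mulVecLin)) :=
    (Submodule.comapSubtypeEquivOfLe hle).finrank_eq
  have htop : Module.finrank ℝ (⊤ : Submodule ℝ (ℝ × ℝ)) = 2 := by
    rw [finrank_top]
    rw [Module.finrank_prod, Module.finrank_self]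
  rw [hcomap, htop] at hrn
  rw [nullity, nullity]
  omega

end LeafStep

lemma nullity_bot {G : SimpleGraph V} (hE : G.edgeSet = ∅) :
    nullity G = Fintype.card V := by
  have hA : G.adjMatrix ℝ = 0 := by
    ext a b
    simp only [SimpleGraph.adjMatrix_apply, Matrix.zero_apply, ite_eq_right_iff]
    intro h
    exact absurd (by rwa [SimpleGraph.mem_edgeSet] : s(a,b) ∈ G.edgeSet) (by rw [hE]; simp)
  rw [nullity, hA]
  rw [Matrix.mulVecLin_zero, LinearMap.ker_zero, finrank_top, Module.finrank_pi]

lemma matchNum_bot {G : SimpleGraph V} (hE : G.edgeSet = ∅) : matchNum G = 0 := by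
  have h0 : (0:ℕ) ∈ {n | ∃ M : Set (Sym2 V), IsMatchingSet G M ∧ M.ncard = n} :=
    ⟨∅, isMatchingSet_empty G, Set.ncard_empty _⟩
  have hle : matchNum G ≤ 0 := by
    apply csSup_le ⟨0, h0⟩
    rintro n ⟨M, hM, rfl⟩
    have : M = ∅ := Set.subset_eq_empty (by rw [← hE]; exact hM.1) rfl
    simp [this]
  exact Nat.le_zero.mp hle

lemma indepNum_bot {G : SimpleGraph V} (hE : G.edgeSet = ∅) :
    _root_.indepNum G = Fintype.card V := by
  have h1 : _root_.IsIndepSet G (Set.univ : Set V) := by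
    intro a _ b _ hab hAdj
    exact absurd (by rwa [SimpleGraph.mem_edgeSet] : s(a,b) ∈ G.edgeSet) (by rw [hE]; simp)
  have h2 := le_indepNum h1
  rw [Set.ncard_univ, Nat.card_eq_fintype_card] at h2
  obtain ⟨I, hI, hc⟩ := exists_maxIndep G
  have h3 : I.ncard ≤ Fintype.card V := by
    have := Set.ncard_le_ncard (Set.subset_univ I) Set.finite_univ
    rwa [Set.ncard_univ, Nat.card_eq_fintype_card] at this
  omega

lemma forest_formulas : ∀ (n : ℕ) (G : SimpleGraph V), G.edgeFinset.card = n → G.IsAcyclic →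
    _root_.indepNum G + matchNum G = Fintype.card V ∧
      nullity G + 2 * matchNum G = Fintype.card V := by
  intro n
  induction n using Nat.strong_induction_on with
  | _ n IH =>
    intro G hn hG
    by_cases hE : G.edgeSet = ∅
    · rw [matchNum_bot hE, indepNum_bot hE, nullity_bot hE]
      omega
    · obtain ⟨ℓ, p, hadj, hleaf⟩ := exists_leaf hG (Set.nonempty_iff_ne_empty.mpr hE)
      have hcard : (avoid G {ℓ, p}).edgeFinset.card < n := by
        rw [← hn]
        apply Finset.card_lt_card
        constructor
        · intro e he
          rw [SimpleGraph.mem_edgeFinset] at he ⊢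
          exact SimpleGraph.edgeSet_mono (avoid_le G _) he
        · intro hsub
          have h1 : s(ℓ, p) ∈ G.edgeFinset := by
            rw [SimpleGraph.mem_edgeFinset, SimpleGraph.mem_edgeSet]; exact hadj
          have h2 := hsub h1
          rw [SimpleGraph.mem_edgeFinset, SimpleGraph.mem_edgeSet] at h2
          exact h2.2.1 (Set.mem_insert _ _)
      obtain ⟨ih1, ih2⟩ := IH _ hcard (avoid G {ℓ, p}) rfl (isAcyclic_of_le hG (avoid_le G _))
      have hm := matchNum_leaf_step hadj hleaf
      have hi := indepNum_leaf_step hadj hleaf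
      have hnl := nullity_leaf_step hadj hleaf
      omega

end Aux4
noncomputable section Aux5
set_option linter.unusedVariables false
set_option linter.unusedSectionVars false
set_option maxHeartbeats 1000000
open SimpleGraph Matrix Module

variable {V : Type*} [Fintype V]

/-- In a forest, a vertex missed by some maximum matching is in the support. -/
lemma missed_mem_nullSupp {G : SimpleGraph V} (hG : G.IsAcyclic) {M : Set (Sym2 V)}
    (hM : IsMatchingSet G M) (hmax : M.ncard = matchNum G) {v : V} (hv : ¬ Saturates M v) :
    v ∈ nullSupp G := by
  by_contra hsupp
  have hvan : ∀ x : V → ℝ, G.adjMatrix ℝ *ᵥ x = 0 → x v = 0 := by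
    intro x hx
    by_contra h
    exact hsupp ⟨x, hx, h⟩
  have hle : LinearMap.ker ((G.adjMatrix ℝ).mulVecLin)
      ≤ LinearMap.ker (((avoid G {v}).adjMatrix ℝ).mulVecLin) := by
    intro x hx
    rw [mem_nullKer_iff] at hx ⊢
    funext w
    rw [Pi.zero_apply]
    by_cases hw : w ∈ ({v} : Set V)
    · exact avoid_mulVec_mem hw x
    · rw [avoid_mulVec_eq hw ?_, hx, Pi.zero_apply]
      intro u hu huS
      rcases huS with rfl
      exact hvan x hx
  have hsingle : (Pi.single v 1 : V → ℝ)
      ∈ LinearMap.ker (((avoid G {v}).adjMatrix ℝ).mulVecLin) :=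
    single_mem_ker_avoid rfl
  have hnot : (Pi.single v 1 : V → ℝ) ∉ LinearMap.ker ((G.adjMatrix ℝ).mulVecLin) := by
    intro h
    have := hvan _ (mem_nullKer_iff.mp h)
    rw [Pi.single_eq_same] at this
    exact one_ne_zero this
  have hlt : LinearMap.ker ((G.adjMatrix ℝ).mulVecLin)
      < LinearMap.ker (((avoid G {v}).adjMatrix ℝ).mulVecLin) :=
    lt_of_le_of_ne hle (fun h => hnot (h ▸ hsingle))
  have hfr := Submodule.finrank_lt_finrank_of_lt hlt
  have hμ : matchNum (avoid G {v}) = matchNum G := by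
    have h1 : matchNum (avoid G {v}) ≤ matchNum G := matchNum_le_of_le (avoid_le G _)
    have h2 : matchNum G ≤ matchNum (avoid G {v}) := by
      rw [← hmax]
      apply le_matchNum
      refine ⟨fun e he => mem_avoid_edgeSet (hM.1 he) ?_, hM.2⟩
      intro x hx hxv
      rcases hxv with rfl
      exact hv ⟨e, he, hx⟩
    omega
  have f1 := (forest_formulas _ G rfl hG).2
  have f2 := (forest_formulas _ (avoid G {v}) rfl (isAcyclic_of_le hG (avoid_le G _))).2
  rw [nullity] at f1 f2
  omega

/-- Derived: every maximum matching saturates a non-support vertex. -/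
lemma saturates_of_not_supp {G : SimpleGraph V} (hG : G.IsAcyclic) {v : V}
    (hv : v ∉ nullSupp G) {M : Set (Sym2 V)} (hM : IsMatchingSet G M)
    (hmax : M.ncard = matchNum G) : Saturates M v := by
  by_contra h
  exact hv (missed_mem_nullSupp hG hM hmax h)

lemma matchNum_avoid_singleton {G : SimpleGraph V} (hG : G.IsAcyclic) {v : V}
    (hv : v ∉ nullSupp G) : matchNum (avoid G {v}) + 1 ≤ matchNum G := by
  obtain ⟨M', hM', hc'⟩ := exists_maxMatching (avoid G {v})
  have hMG : IsMatchingSet G M' :=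
    ⟨fun e he => SimpleGraph.edgeSet_mono (avoid_le G _) (hM'.1 he), hM'.2⟩
  have hlt : M'.ncard < matchNum G := by
    rcases lt_or_eq_of_le (le_matchNum hMG) with h | h
    · exact h
    · exfalso
      obtain ⟨e, he, hve⟩ := saturates_of_not_supp hG hv hMG h
      exact avoid_edge_not_mem (hM'.1 he) hve rfl
  omega

end Aux5
noncomputable section Aux6
set_option linter.unusedVariables false
set_option linter.unusedSectionVars false
set_option maxHeartbeats 1000000
open SimpleGraph Matrix

variable {V : Type*} [Fintype V]

lemma matchingSet_mono {G H : SimpleGraph V} (hle : H ≤ G) {M : Set (Sym2 V)}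
    (hM : IsMatchingSet H M) : IsMatchingSet G M :=
  ⟨fun e he => SimpleGraph.edgeSet_mono hle (hM.1 he), hM.2⟩

lemma avoid_mono {G : SimpleGraph V} {S T : Set V} (h : S ⊆ T) : avoid G T ≤ avoid G S :=
  fun a b hab => ⟨hab.1, fun ha => hab.2.1 (h ha), fun hb => hab.2.2 (h hb)⟩

lemma ncard_partition {α ι : Type*} (s : Finset ι) (f : ι → Set α)
    (hdisj : ∀ i ∈ s, ∀ j ∈ s, i ≠ j → ∀ x, x ∈ f i → x ∈ f j → False)
    (hfin : ∀ i, (f i).Finite) :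
    (⋃ i ∈ s, f i).ncard = ∑ i ∈ s, (f i).ncard := by
  classical
  induction s using Finset.induction_on with
  | empty => simp
  | @insert a s ha ih =>
    rw [Finset.sum_insert ha]
    have hU : (⋃ i ∈ insert a s, f i) = f a ∪ ⋃ i ∈ s, f i := by
      simp [Set.biUnion_insert]
    have hdisj2 : Disjoint (f a) (⋃ i ∈ s, f i) := by
      rw [Set.disjoint_left]
      intro x hxa hxU
      rw [Set.mem_iUnion₂] at hxU
      obtain ⟨i, hi, hxi⟩ := hxU
      exact hdisj a (Finset.mem_insert_self a s) i (Finset.mem_insert_of_mem hi)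
        (fun h => ha (h ▸ hi)) x hxa hxi
    rw [hU, Set.ncard_union_eq hdisj2 (hfin a)
      (Set.Finite.biUnion (Set.finite_mem_finset s) (fun i _ => hfin i)),
      ih (fun i hi j hj hij => hdisj i (Finset.mem_insert_of_mem hi) j
        (Finset.mem_insert_of_mem hj) hij)]

section Branch

variable (G : SimpleGraph V) (v : V)

/-- The branch of `G - v` containing `u`. -/
def Bset (u : V) : Set V := {w | (avoid G {v}).Reachable u w}

variable {G v}

lemma Bset_self (u : V) : u ∈ Bset G v u := SimpleGraph.Reachable.refl u

lemma reach_avoid_eq {a : V} (h : (avoid G {v}).Reachable a v) : a = v := by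
  obtain ⟨wk⟩ := h.symm
  cases wk with
  | nil => rfl
  | cons h q => exact absurd rfl h.2.1

lemma v_not_mem_Bset {u : V} (hu : u ≠ v) : v ∉ Bset G v u := by
  intro h
  exact hu (reach_avoid_eq h)

lemma Bset_closed {u w z : V} (hwB : w ∈ Bset G v u) (hadj : G.Adj w z)
    (hw : w ≠ v) (hz : z ≠ v) : z ∈ Bset G v u :=
  hwB.trans (SimpleGraph.Adj.reachable ⟨hadj, hw, hz⟩)

lemma Bset_cover (hT : G.IsTree) {w : V} (hw : w ≠ v) :
    ∃ u, G.Adj v u ∧ w ∈ Bset G v u := by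
  obtain ⟨wk⟩ := hT.isConnected.preconnected v w
  obtain ⟨pw, hp⟩ := wk.toPath
  cases pw with
  | nil => exact absurd rfl hw
  | @cons _ u _ h q =>
    rw [SimpleGraph.Walk.cons_isPath_iff] at hp
    refine ⟨u, h, ?_⟩
    refine ⟨q.transfer (avoid G {v}) ?_⟩
    intro e he
    induction e using Sym2.ind with
    | _ a b =>
      have heG : s(a, b) ∈ G.edgeSet := q.edges_subset_edgeSet he
      apply mem_avoid_edgeSet heG
      intro x hx hxv
      rcases hxv with rfl
      rcases Sym2.mem_iff.mp hx with rfl | rfl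
      · exact hp.2 (q.fst_mem_support_of_mem_edges he)
      · exact hp.2 (q.snd_mem_support_of_mem_edges he)

lemma Bset_disjoint (hT : G.IsTree) {u u' : V} (hu : G.Adj v u) (hu' : G.Adj v u')
    (hne : u ≠ u') : ∀ w, w ∈ Bset G v u → w ∈ Bset G v u' → False := by
  intro w h1 h2
  have hr : (avoid G {v}).Reachable u u' := h1.trans h2.symm
  obtain ⟨wk⟩ := hr
  obtain ⟨p0, hp0⟩ := wk.toPath
  have hvsup : v ∉ p0.support := by
    intro hvs
    have : (avoid G {v}).Reachable u v := ⟨p0.takeUntil v hvs⟩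
    exact (G.ne_of_adj hu).symm (reach_avoid_eq this)
  have hedges : ∀ e ∈ p0.edges, e ∈ G.edgeSet :=
    fun e he => SimpleGraph.edgeSet_mono (avoid_le G _) (p0.edges_subset_edgeSet he)
  set q := p0.transfer G hedges with hqdef
  have hq : q.IsPath := by
    rw [SimpleGraph.Walk.isPath_def, SimpleGraph.Walk.support_transfer]
    exact hp0.support_nodup
  have hqsup : v ∉ q.support := by
    rw [hqdef, SimpleGraph.Walk.support_transfer]
    exact hvsup
  -- the path u - v - u'
  set p1 : G.Walk u u' := SimpleGraph.Walk.cons hu.symm (SimpleGraph.Walk.cons hu' SimpleGraph.Walk.nil) with hp1def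
  have hp1 : p1.IsPath := by
    rw [hp1def, SimpleGraph.Walk.cons_isPath_iff, SimpleGraph.Walk.cons_isPath_iff]
    refine ⟨⟨SimpleGraph.Walk.IsPath.nil, by simp [(G.ne_of_adj hu')]⟩, ?_⟩
    simp only [SimpleGraph.Walk.support_cons, SimpleGraph.Walk.support_nil, List.mem_cons,
      List.mem_singleton, not_or]
    exact ⟨(G.ne_of_adj hu).symm, hne, by simp⟩
  have huniq := (SimpleGraph.isAcyclic_iff_path_unique.mp hT.2) ⟨p1, hp1⟩ ⟨q, hq⟩
  have : v ∈ q.support := by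
    have hsupp := congrArg (fun r : G.Path u u' => (r : G.Walk u u').support) huniq
    simp only at hsupp
    rw [← hsupp, hp1def]
    simp
  exact hqsup this

lemma edge_in_branch (hT : G.IsTree) {e : Sym2 V} (he : e ∈ (avoid G {v}).edgeSet) :
    ∃ u, G.Adj v u ∧ ∀ x ∈ e, x ∈ Bset G v u := by
  induction e using Sym2.ind with
  | _ a b =>
    rw [SimpleGraph.mem_edgeSet] at he
    obtain ⟨hab, ha, hb⟩ := he
    obtain ⟨u, hu, haB⟩ := Bset_cover hT (by simpa using ha)
    refine ⟨u, hu, ?_⟩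
    intro x hx
    rcases Sym2.mem_iff.mp hx with rfl | rfl
    · exact haB
    · exact Bset_closed haB hab (by simpa using ha) (by simpa using hb)

/-- splitting a matching avoiding `v` into branches -/
lemma matching_split (hT : G.IsTree) {M : Set (Sym2 V)}
    (hM : IsMatchingSet (avoid G {v}) M) :
    M.ncard = ∑ u ∈ G.neighborFinset v, {e ∈ M | ∀ x ∈ e, x ∈ Bset G v u}.ncard := by
  have hcover : M = ⋃ u ∈ G.neighborFinset v, {e ∈ M | ∀ x ∈ e, x ∈ Bset G v u} := by
    apply Set.Subset.antisymm
    · intro e he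
      obtain ⟨u, hu, hB⟩ := edge_in_branch hT (hM.1 he)
      rw [Set.mem_iUnion₂]
      exact ⟨u, (SimpleGraph.mem_neighborFinset G v u).mpr hu, he, hB⟩
    · intro e he
      rw [Set.mem_iUnion₂] at he
      obtain ⟨u, _, he, _⟩ := he
      exact he
  rw [hcover]
  nth_rewrite 2 [← hcover]
  apply ncard_partition
  · intro i hi j hj hij e he1 he2
    rw [SimpleGraph.mem_neighborFinset] at hi hj
    induction e using Sym2.ind with
    | _ a b =>
      exact Bset_disjoint hT hi hj hij a (he1.2 a (Sym2.mem_mk_left a b))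
        (he2.2 a (Sym2.mem_mk_left a b))
  · intro i
    exact Set.toFinite _

end Branch

end Aux6
noncomputable section Aux7
set_option linter.unusedVariables false
set_option linter.unusedSectionVars false
set_option maxHeartbeats 1000000
open SimpleGraph Matrix

variable {V : Type*} [Fintype V]

lemma matchNum_nbhd {G : SimpleGraph V} (hT : G.IsTree) {v : V} (hvS : v ∉ nullSupp G)
    (hnS : ∀ u, G.Adj v u → u ∉ nullSupp G) :
    matchNum (avoid G (insert v (G.neighborSet v))) + (G.neighborFinset v).card
      ≤ matchNum G := by
  classical
  have hac : G.IsAcyclic := hT.2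
  set nbr := G.neighborFinset v with hnbr
  set μB : V → ℕ := fun u => matchNum (avoid G (Bset G v u)ᶜ) with hμB
  set μB' : V → ℕ := fun u => matchNum (avoid G (insert u (Bset G v u)ᶜ)) with hμB'
  obtain ⟨M, hM, hMc⟩ := exists_maxMatching G
  obtain ⟨e0, he0, hv0⟩ := saturates_of_not_supp hac hvS hM hMc
  obtain ⟨u0, rfl⟩ := Sym2.mem_iff_exists.mp hv0
  have hu0 : G.Adj v u0 := by
    have := hM.1 he0
    rwa [SimpleGraph.mem_edgeSet] at this
  have hu0nbr : u0 ∈ nbr := (SimpleGraph.mem_neighborFinset G v u0).mpr hu0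
  -- (1) matchNum G ≤ ∑ μB + 1
  have hM0 : IsMatchingSet (avoid G {v}) (M \ {s(v, u0)}) := by
    constructor
    · rintro e ⟨heM, hee0⟩
      apply mem_avoid_edgeSet (hM.1 heM)
      intro x hx hxv
      rcases hxv with rfl
      by_cases h : e = s(x, u0)
      · exact hee0 h
      · exact hM.2 heM he0 h x ⟨hx, Sym2.mem_mk_left _ _⟩
    · exact hM.2.mono Set.diff_subset
  have hsplitM0 := matching_split hT hM0
  have hMle : ∀ u ∈ nbr, {e ∈ M \ {s(v, u0)} | ∀ x ∈ e, x ∈ Bset G v u}.ncard ≤ μB u := by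
    intro u hu
    apply le_matchNum
    constructor
    · rintro e ⟨heM, hB⟩
      apply mem_avoid_edgeSet (hM.1 heM.1)
      intro x hx hxc
      exact hxc (hB x hx)
    · exact hM.2.mono (fun e he => he.1.1)
  have hsum1 : (M \ {s(v, u0)}).ncard ≤ ∑ u ∈ nbr, μB u := by
    rw [hsplitM0]
    exact Finset.sum_le_sum hMle
  have hdiffc : (M \ {s(v, u0)}).ncard = M.ncard - 1 :=
    Set.ncard_diff_singleton_of_mem he0
  have hMpos : 0 < M.ncard := (Set.ncard_pos (Set.toFinite M)).mpr ⟨_, he0⟩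
  have hge : matchNum G ≤ (∑ u ∈ nbr, μB u) + 1 := by omega
  -- (2) ∑ μB + 1 ≤ matchNum G
  have hch : ∀ u : V, ∃ K, IsMatchingSet (avoid G (Bset G v u)ᶜ) K ∧ K.ncard = μB u :=
    fun u => exists_maxMatching _
  choose F hF1 hF2 using hch
  have hFB : ∀ u, ∀ e ∈ F u, ∀ x ∈ e, x ∈ Bset G v u := by
    intro u e he x hx
    have := avoid_edge_not_mem ((hF1 u).1 he) hx
    simpa using this
  have hKdisj : ∀ i ∈ nbr, ∀ j ∈ nbr, i ≠ j → ∀ x, x ∈ F i → x ∈ F j → False := by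
    intro i hi j hj hij e hei hej
    induction e using Sym2.ind with
    | _ a b =>
      exact Bset_disjoint hT ((SimpleGraph.mem_neighborFinset G v i).mp hi)
        ((SimpleGraph.mem_neighborFinset G v j).mp hj) hij a
        (hFB i _ hei a (Sym2.mem_mk_left a b)) (hFB j _ hej a (Sym2.mem_mk_left a b))
  have hKcard : (⋃ u ∈ nbr, F u).ncard = ∑ u ∈ nbr, μB u := by
    rw [ncard_partition nbr F hKdisj (fun i => Set.toFinite _)]
    exact Finset.sum_congr rfl (fun u _ => hF2 u)
  have hKmatch : IsMatchingSet G (⋃ u ∈ nbr, F u) := by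
    constructor
    · intro e he
      rw [Set.mem_iUnion₂] at he
      obtain ⟨u, hu, heu⟩ := he
      exact SimpleGraph.edgeSet_mono (avoid_le G _) ((hF1 u).1 heu)
    · intro e he f hf hef x hxef
      rw [Set.mem_iUnion₂] at he hf
      obtain ⟨i, hi, hei⟩ := he
      obtain ⟨j, hj, hfj⟩ := hf
      by_cases hij : i = j
      · subst hij
        exact (hF1 i).2 hei hfj hef x hxef
      · exact Bset_disjoint hT ((SimpleGraph.mem_neighborFinset G v i).mp hi)
          ((SimpleGraph.mem_neighborFinset G v j).mp hj) hij x
          (hFB i _ hei x hxef.1) (hFB j _ hfj x hxef.2)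
  have hKmiss : ∀ e ∈ ⋃ u ∈ nbr, F u, v ∉ e := by
    intro e he hv'
    rw [Set.mem_iUnion₂] at he
    obtain ⟨u, hu, heu⟩ := he
    exact v_not_mem_Bset (G.ne_of_adj ((SimpleGraph.mem_neighborFinset G v u).mp hu)).symm
      (hFB u _ heu v hv')
  have hlt : (⋃ u ∈ nbr, F u).ncard < matchNum G := by
    rcases lt_or_eq_of_le (le_matchNum hKmatch) with h | h
    · exact h
    · exfalso
      obtain ⟨e, he, hve⟩ := saturates_of_not_supp hac hvS hKmatch h
      exact hKmiss e he hve
  have hle2 : (∑ u ∈ nbr, μB u) + 1 ≤ matchNum G := by omega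
  -- (3) at most one branch with μB' = μB
  have hbad : ∀ u1 ∈ nbr, ∀ u2 ∈ nbr, u1 ≠ u2 → μB' u1 = μB u1 → μB' u2 = μB u2 → False := by
    intro u1 h1 u2 h2 h12 hb1 hb2
    have hadj1 : G.Adj v u1 := (SimpleGraph.mem_neighborFinset G v u1).mp h1
    have hadj2 : G.Adj v u2 := (SimpleGraph.mem_neighborFinset G v u2).mp h2
    have hch2 : ∀ u : V, ∃ K, IsMatchingSet (avoid G (Bset G v u)ᶜ) K ∧ K.ncard = μB u ∧
        ((u = u1 ∨ u = u2) → ∀ e ∈ K, u ∉ e) := by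
      intro u
      by_cases hcase : u = u1 ∨ u = u2
      · obtain ⟨K, hK, hKc⟩ := exists_maxMatching (avoid G (insert u (Bset G v u)ᶜ))
        refine ⟨K, ⟨fun e he =>
          SimpleGraph.edgeSet_mono (avoid_mono (Set.subset_insert u _)) (hK.1 he), hK.2⟩,
          ?_, ?_⟩
        · rw [hKc]
          rcases hcase with rfl | rfl
          · exact hb1
          · exact hb2
        · intro _ e he hue
          exact avoid_edge_not_mem (hK.1 he) hue (Set.mem_insert u _)
      · obtain ⟨K, hK, hKc⟩ := exists_maxMatching (avoid G (Bset G v u)ᶜ)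
        exact ⟨K, hK, hKc, fun hc => absurd hc hcase⟩
    choose F2 hF2a hF2b hF2c using hch2
    have hFB2 : ∀ u, ∀ e ∈ F2 u, ∀ x ∈ e, x ∈ Bset G v u := by
      intro u e he x hx
      have := avoid_edge_not_mem ((hF2a u).1 he) hx
      simpa using this
    have hK2disj : ∀ i ∈ nbr, ∀ j ∈ nbr, i ≠ j → ∀ x, x ∈ F2 i → x ∈ F2 j → False := by
      intro i hi j hj hij e hei hej
      induction e using Sym2.ind with
      | _ a b =>
        exact Bset_disjoint hT ((SimpleGraph.mem_neighborFinset G v i).mp hi)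
          ((SimpleGraph.mem_neighborFinset G v j).mp hj) hij a
          (hFB2 i _ hei a (Sym2.mem_mk_left a b)) (hFB2 j _ hej a (Sym2.mem_mk_left a b))
    have hK2card : (⋃ u ∈ nbr, F2 u).ncard = ∑ u ∈ nbr, μB u := by
      rw [ncard_partition nbr F2 hK2disj (fun i => Set.toFinite _)]
      exact Finset.sum_congr rfl (fun u _ => hF2b u)
    have hK2miss : ∀ e ∈ ⋃ u ∈ nbr, F2 u, v ∉ e := by
      intro e he hv'
      rw [Set.mem_iUnion₂] at he
      obtain ⟨u, hu, heu⟩ := he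
      exact v_not_mem_Bset (G.ne_of_adj ((SimpleGraph.mem_neighborFinset G v u).mp hu)).symm
        (hFB2 u _ heu v hv')
    have hu1miss : ∀ e ∈ ⋃ u ∈ nbr, F2 u, u1 ∉ e := by
      intro e he hu1'
      rw [Set.mem_iUnion₂] at he
      obtain ⟨u, hu, heu⟩ := he
      by_cases huu : u = u1
      · subst huu
        exact hF2c u (Or.inl rfl) e heu hu1'
      · exact Bset_disjoint hT ((SimpleGraph.mem_neighborFinset G v u).mp hu) hadj1
          huu u1 (hFB2 u _ heu u1 hu1') (Bset_self u1)
    have hnotmem : s(v, u1) ∉ ⋃ u ∈ nbr, F2 u := by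
      intro h
      exact hK2miss _ h (Sym2.mem_mk_left v u1)
    have hNmatch : IsMatchingSet G (insert s(v, u1) (⋃ u ∈ nbr, F2 u)) := by
      constructor
      · rintro e (rfl | he)
        · rwa [SimpleGraph.mem_edgeSet]
        · rw [Set.mem_iUnion₂] at he
          obtain ⟨u, hu, heu⟩ := he
          exact SimpleGraph.edgeSet_mono (avoid_le G _) ((hF2a u).1 heu)
      · intro e he f hf hef x hxef
        rcases he with rfl | he <;> rcases hf with rfl | hf
        · exact hef rfl
        · rcases Sym2.mem_iff.mp hxef.1 with rfl | rfl
          · exact hK2miss f hf hxef.2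
          · exact hu1miss f hf hxef.2
        · rcases Sym2.mem_iff.mp hxef.2 with rfl | rfl
          · exact hK2miss e he hxef.1
          · exact hu1miss e he hxef.1
        · rw [Set.mem_iUnion₂] at he hf
          obtain ⟨i, hi, hei⟩ := he
          obtain ⟨j, hj, hfj⟩ := hf
          by_cases hij : i = j
          · subst hij
            exact (hF2a i).2 hei hfj hef x hxef
          · exact Bset_disjoint hT ((SimpleGraph.mem_neighborFinset G v i).mp hi)
              ((SimpleGraph.mem_neighborFinset G v j).mp hj) hij x
              (hFB2 i _ hei x hxef.1) (hFB2 j _ hfj x hxef.2)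
    have hNcard : (insert s(v, u1) (⋃ u ∈ nbr, F2 u)).ncard = (∑ u ∈ nbr, μB u) + 1 := by
      rw [Set.ncard_insert_of_notMem hnotmem (Set.toFinite _), hK2card]
    have hNmax : (insert s(v, u1) (⋃ u ∈ nbr, F2 u)).ncard = matchNum G := by
      have := le_matchNum hNmatch
      omega
    obtain ⟨e, he, hu2e⟩ := saturates_of_not_supp hac (hnS u2 hadj2) hNmatch hNmax
    rcases he with rfl | he
    · rcases Sym2.mem_iff.mp hu2e with rfl | rfl
      · exact (G.ne_of_adj hadj2) rfl
      · exact h12 rfl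
    · rw [Set.mem_iUnion₂] at he
      obtain ⟨u, hu, heu⟩ := he
      by_cases huu : u = u2
      · subst huu
        exact hF2c u (Or.inr rfl) e heu hu2e
      · exact Bset_disjoint hT ((SimpleGraph.mem_neighborFinset G v u).mp hu) hadj2
          huu u2 (hFB2 u _ heu u2 hu2e) (Bset_self u2)
  -- (4) conclusion
  obtain ⟨M', hM', hM'c⟩ := exists_maxMatching (avoid G (insert v (G.neighborSet v)))
  have hM'v : IsMatchingSet (avoid G {v}) M' := by
    constructor
    · intro e he
      apply mem_avoid_edgeSet (SimpleGraph.edgeSet_mono (avoid_le G _) (hM'.1 he))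
      intro x hx hxv
      rcases hxv with rfl
      exact avoid_edge_not_mem (hM'.1 he) hx (Set.mem_insert x _)
    · exact hM'.2
  have hsplit' := matching_split hT hM'v
  have hle3 : ∀ u ∈ nbr, {e ∈ M' | ∀ x ∈ e, x ∈ Bset G v u}.ncard ≤ μB' u := by
    intro u hu
    apply le_matchNum
    constructor
    · rintro e ⟨heM, hB⟩
      apply mem_avoid_edgeSet (SimpleGraph.edgeSet_mono (avoid_le G _) (hM'.1 heM))
      intro x hx hxS
      rcases hxS with rfl | hxc
      · exact avoid_edge_not_mem (hM'.1 heM) hx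
          (Set.mem_insert_of_mem _ ((SimpleGraph.mem_neighborFinset G v x).mp hu))
      · exact hxc (hB x hx)
    · exact hM'.2.mono (Set.sep_subset _ _)
  have hM'le : M'.ncard ≤ ∑ u ∈ nbr, μB' u := by
    rw [hsplit']
    exact Finset.sum_le_sum hle3
  -- the exceptional branch
  set ustar : V := if h : ∃ u ∈ nbr, μB' u = μB u then h.choose else u0 with hustar
  have hustar_mem : ustar ∈ nbr := by
    rw [hustar]
    split_ifs with h
    · exact h.choose_spec.1
    · exact hu0nbr
  have hkey : ∀ u ∈ nbr.erase ustar, μB' u + 1 ≤ μB u := by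
    intro u hu
    have hune : u ≠ ustar := Finset.ne_of_mem_erase hu
    have humem : u ∈ nbr := Finset.mem_of_mem_erase hu
    have hmono : μB' u ≤ μB u := matchNum_le_of_le (avoid_mono (Set.subset_insert _ _))
    rcases lt_or_eq_of_le hmono with h | h
    · omega
    · exfalso
      have hex : ∃ u ∈ nbr, μB' u = μB u := ⟨u, humem, h⟩
      have hustar_eq : ustar = hex.choose := by
        rw [hustar, dif_pos hex]
      have hbadstar : μB' ustar = μB ustar := by
        rw [hustar_eq]
        exact hex.choose_spec.2
      exact hbad u humem ustar hustar_mem hune h hbadstar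
  have hsum_erase : ∑ u ∈ nbr.erase ustar, (μB' u + 1) ≤ ∑ u ∈ nbr.erase ustar, μB u :=
    Finset.sum_le_sum hkey
  have hsum_distrib : ∑ u ∈ nbr.erase ustar, (μB' u + 1)
      = (∑ u ∈ nbr.erase ustar, μB' u) + (nbr.erase ustar).card := by
    rw [Finset.sum_add_distrib, Finset.sum_const, smul_eq_mul, mul_one]
  have hcard_erase : (nbr.erase ustar).card = nbr.card - 1 :=
    Finset.card_erase_of_mem hustar_mem
  have hd1 : 0 < nbr.card := Finset.card_pos.mpr ⟨u0, hu0nbr⟩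
  have hsplitB' : ∑ u ∈ nbr, μB' u = μB' ustar + ∑ u ∈ nbr.erase ustar, μB' u :=
    (Finset.add_sum_erase nbr μB' hustar_mem).symm
  have hsplitB : ∑ u ∈ nbr, μB u = μB ustar + ∑ u ∈ nbr.erase ustar, μB u :=
    (Finset.add_sum_erase nbr μB hustar_mem).symm
  have hustar_le : μB' ustar ≤ μB ustar := matchNum_le_of_le (avoid_mono (Set.subset_insert _ _))
  omega

end Aux7
theorem fn_vertex_maxIndep {V : Type*} [Fintype V] (G : SimpleGraph V) (hT : G.IsTree)
    (v : V) (hv : v ∈ fnVerts G) :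
    ∃ I₁ I₂ : Set V, IsMaxIndep G I₁ ∧ IsMaxIndep G I₂ ∧ v ∈ I₁ ∧ v ∉ I₂ := by
  classical
  have hac : G.IsAcyclic := hT.2
  simp only [fnVerts, Set.mem_compl_iff, Set.mem_union] at hv
  push_neg at hv
  obtain ⟨hvS, hvC⟩ := hv
  have hnS : ∀ u, G.Adj v u → u ∉ nullSupp G := by
    intro u hu hus
    apply hvC
    exact Set.mem_biUnion hus hu.symm
  have hGal := (forest_formulas _ G rfl hac).1
  -- I₂ : a maximum independent set avoiding v
  have hm1 := matchNum_avoid_singleton hac hvS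
  have hGal1 := (forest_formulas _ (avoid G {v}) rfl (isAcyclic_of_le hac (avoid_le G _))).1
  obtain ⟨I', hI', hI'c⟩ := exists_maxIndep (avoid G {v})
  have hI₂ind : _root_.IsIndepSet G (I' \ {v}) := by
    intro a ha b hb hab hAdj
    exact hI' ha.1 hb.1 hab ⟨hAdj, ha.2, hb.2⟩
  have hI₂c : (I' \ {v}).ncard = _root_.indepNum G := by
    have h1 : (I' \ {v}).ncard ≤ _root_.indepNum G := le_indepNum hI₂ind
    have h2 : I'.ncard - 1 ≤ (I' \ {v}).ncard := by
      by_cases hvI : v ∈ I'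
      · rw [Set.ncard_diff_singleton_of_mem hvI]
      · rw [Set.diff_singleton_eq_self hvI]
        omega
    omega
  have hvI₂ : v ∉ I' \ {v} := fun h => h.2 rfl
  -- I₁ : a maximum independent set containing v
  have hm2 := matchNum_nbhd hT hvS hnS
  have hGal2 := (forest_formulas _ (avoid G (insert v (G.neighborSet v))) rfl
    (isAcyclic_of_le hac (avoid_le G _))).1
  obtain ⟨J', hJ', hJ'c⟩ := exists_maxIndep (avoid G (insert v (G.neighborSet v)))
  have hI₁ind : _root_.IsIndepSet G (insert v (J' \ insert v (G.neighborSet v))) := by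
    intro a ha b hb hab hAdj
    rcases ha with rfl | ⟨haJ, haN⟩
    · rcases hb with rfl | ⟨hbJ, hbN⟩
      · exact hab rfl
      · exact hbN (Set.mem_insert_of_mem _ hAdj)
    · rcases hb with rfl | ⟨hbJ, hbN⟩
      · exact haN (Set.mem_insert_of_mem _ hAdj.symm)
      · exact hJ' haJ hbJ hab ⟨hAdj, haN, hbN⟩
  have hNcard : (insert v (G.neighborSet v)).ncard = (G.neighborFinset v).card + 1 := by
    rw [Set.ncard_insert_of_notMem (by simp) (Set.toFinite _)]
    congr 1
    rw [Set.ncard_eq_toFinset_card' (G.neighborSet v)]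
    congr 1
  have hJcap : (J' ∩ insert v (G.neighborSet v)).ncard ≤ (G.neighborFinset v).card + 1 := by
    rw [← hNcard]
    exact Set.ncard_le_ncard Set.inter_subset_right (Set.toFinite _)
  have hdiffJ : (J' \ insert v (G.neighborSet v)).ncard
      = J'.ncard - (J' ∩ insert v (G.neighborSet v)).ncard := by
    rw [← Set.diff_self_inter]
    exact Set.ncard_diff Set.inter_subset_left (Set.toFinite _)
  have hvnotin : v ∉ J' \ insert v (G.neighborSet v) := fun h => h.2 (Set.mem_insert v _)
  have hI₁c' : (insert v (J' \ insert v (G.neighborSet v))).ncard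
      = (J' \ insert v (G.neighborSet v)).ncard + 1 :=
    Set.ncard_insert_of_notMem hvnotin (Set.toFinite _)
  have h1 : (insert v (J' \ insert v (G.neighborSet v))).ncard ≤ _root_.indepNum G :=
    le_indepNum hI₁ind
  have hI₁c : (insert v (J' \ insert v (G.neighborSet v))).ncard = _root_.indepNum G := by
    omega
  exact ⟨_, _, ⟨hI₁ind, hI₁c⟩, ⟨hI₂ind, hI₂c⟩, Set.mem_insert _ _, hvI₂⟩
end

section
/- Let T be a tree and C ⊆ Core(T) a nonempty subset of the core. Then the number of supported neighbors strictly exceeds |C|: |N(C) ∩ Supp(T)| > |C|. -/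
open SimpleGraph Matrix

attribute [local instance] Classical.propDecidable

section aux

open SimpleGraph Matrix Finset Walk

variable {V : Type*}

/-- There is a null vector of the adjacency matrix that is nonzero on all of `nullSupp`. -/
lemma exists_full_null [Fintype V] (G : SimpleGraph V) :
    ∃ x : V → ℝ, G.adjMatrix ℝ *ᵥ x = 0 ∧ ∀ v ∈ nullSupp G, x v ≠ 0 := by
  classical
  suffices h : ∀ F : Finset V, ∃ x : V → ℝ, G.adjMatrix ℝ *ᵥ x = 0 ∧
      ∀ v ∈ F, v ∈ nullSupp G → x v ≠ 0 by
    obtain ⟨x, hx, h2⟩ := h Finset.univ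
    exact ⟨x, hx, fun v hv => h2 v (Finset.mem_univ v) hv⟩
  intro F
  induction F using Finset.induction_on with
  | empty => exact ⟨0, by simp, by simp⟩
  | @insert a F ha ih =>
    obtain ⟨x, hx0, hxF⟩ := ih
    by_cases haS : a ∈ nullSupp G
    · obtain ⟨y, hy0, hya⟩ := haS
      set B : Finset ℝ := (insert a F).image (fun v => -(x v) / (y v)) with hB
      obtain ⟨t, ht⟩ := Infinite.exists_notMem_finset B
      refine ⟨x + t • y, by rw [Matrix.mulVec_add, hx0, Matrix.mulVec_smul, hy0]; simp, ?_⟩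
      intro v hv hvS
      have hval : (x + t • y) v = x v + t * y v := rfl
      rw [hval]
      intro h0
      by_cases hyv : y v = 0
      · rw [hyv, mul_zero, add_zero] at h0
        rcases Finset.mem_insert.mp hv with rfl | hvF
        · exact hya hyv
        · exact hxF v hvF hvS h0
      · apply ht
        rw [hB]
        apply Finset.mem_image.mpr
        refine ⟨v, hv, ?_⟩
        field_simp
        linarith [h0]
    · refine ⟨x, hx0, ?_⟩
      intro v hv hvS
      rcases Finset.mem_insert.mp hv with rfl | hvF
      · exact absurd hvS haS
      · exact hxF v hvF hvS

/-- Appending an edge to a path whose new endpoint is fresh gives a path. -/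
lemma isPath_concat {G : SimpleGraph V} {u a b : V} {p : G.Walk u a} (hp : p.IsPath)
    (h : G.Adj a b) (hb : b ∉ p.support) : (p.concat h).IsPath := by
  rw [← Walk.isPath_reverse_iff, Walk.reverse_concat]
  exact ((Walk.isPath_reverse_iff p).mpr hp).cons (by simpa using hb)

/-- In an acyclic graph, a null vector of the adjacency matrix cannot be nonzero on
two adjacent vertices. -/
lemma null_indep [Fintype V] {G : SimpleGraph V} (hA : G.IsAcyclic)
    {x : V → ℝ} (hx : G.adjMatrix ℝ *ᵥ x = 0) {u v : V} (huv : G.Adj u v)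
    (hu : x u ≠ 0) (hv : x v ≠ 0) : False := by
  classical
  have key : ∀ n : ℕ, ∃ (a b : V) (hab : G.Adj a b) (p : G.Walk u a),
      (p.concat hab).IsPath ∧ p.length = n ∧
      ∀ w ∈ (p.concat hab).support, x w ≠ 0 := by
    intro n
    induction n with
    | zero =>
      refine ⟨u, v, huv, Walk.nil, ?_, rfl, ?_⟩
      · rw [Walk.concat_nil]
        simp [Walk.cons_isPath_iff, huv.ne]
      · intro w hw
        rw [Walk.concat_nil, Walk.support_cons, Walk.support_nil] at hw
        simp only [List.mem_cons, List.mem_singleton, List.not_mem_nil, or_false] at hw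
        rcases hw with h1 | h1
        · rw [h1]; exact hu
        · rw [h1]; exact hv
    | succ n ih =>
      obtain ⟨a, b, hab, p, hp, hlen, hsupp⟩ := ih
      have hsum : ∑ z ∈ G.neighborFinset b, x z = 0 := by
        have := congrFun hx b
        rwa [SimpleGraph.adjMatrix_mulVec_apply, Pi.zero_apply] at this
      have haq : a ∈ (p.concat hab).support := by
        rw [Walk.support_concat, List.mem_append]
        exact Or.inl p.end_mem_support
      have hxa : x a ≠ 0 := hsupp a haq
      have haN : a ∈ G.neighborFinset b := by
        rw [SimpleGraph.mem_neighborFinset]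
        exact hab.symm
      have hex : ∃ z ∈ G.neighborFinset b, z ≠ a ∧ x z ≠ 0 := by
        by_contra hcon
        push_neg at hcon
        rw [Finset.sum_eq_single_of_mem a haN
          (fun z hz hne => hcon z hz hne)] at hsum
        exact hxa hsum
      obtain ⟨z, hzN, hza, hxz⟩ := hex
      have hbz : G.Adj b z := (SimpleGraph.mem_neighborFinset (G := G) b z).mp hzN
      have hznq : z ∉ (p.concat hab).support := by
        intro hzq
        set q := p.concat hab with hqdef
        have hq2 : (q.dropUntil z hzq).IsPath := hp.dropUntil hzq
        have heqp := hA.path_unique ⟨q.dropUntil z hzq, hq2⟩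
          (SimpleGraph.Path.singleton hbz.symm)
        have hval : q.dropUntil z hzq = (SimpleGraph.Path.singleton hbz.symm).val :=
          congrArg Subtype.val heqp
        have hedge : s(z, b) ∈ (q.dropUntil z hzq).edges := by
          rw [hval]
          simp [SimpleGraph.Path.singleton]
        have hedge' : s(z, b) ∈ q.edges := Walk.edges_dropUntil_subset _ _ hedge
        rw [hqdef, Walk.edges_concat, List.concat_eq_append, List.mem_append] at hedge'
        rcases hedge' with h1 | h2
        · have hbp : b ∈ p.support := Walk.snd_mem_support_of_mem_edges p h1
          have hnd := hp.support_nodup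
          rw [Walk.support_concat] at hnd
          rw [List.nodup_append'] at hnd
          exact hnd.2.2 hbp (List.mem_singleton_self b)
        · rw [List.mem_singleton] at h2
          rcases Sym2.eq_iff.mp h2 with ⟨h3, _⟩ | ⟨h3, _⟩
          · exact hza h3
          · exact hbz.ne' h3
      refine ⟨b, z, hbz, p.concat hab, isPath_concat hp hbz hznq, ?_, ?_⟩
      · rw [Walk.length_concat, hlen]
      · intro w hw
        rw [Walk.support_concat, List.mem_append] at hw
        rcases hw with h1 | h2
        · exact hsupp w h1
        · rw [List.mem_singleton] at h2; rw [h2]; exact hxz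
  obtain ⟨a, b, hab, p, hp, hlen, _⟩ := key (Fintype.card V)
  have hlt := hp.length_lt
  rw [Walk.length_concat, hlen] at hlt
  omega

/-- Any vertex on a walk from `r` is within `p.length` of `r`. -/
lemma dist_le_of_mem_support {G : SimpleGraph V} {r z w : V} (p : G.Walk r w)
    (hz : z ∈ p.support) : G.dist r z ≤ p.length := by
  calc G.dist r z ≤ (p.takeUntil z hz).length := SimpleGraph.dist_le _
    _ ≤ p.length := Walk.length_takeUntil_le p hz

/-- In a tree, adjacent vertices are at different distances from any root. -/
lemma tree_adj_dist_ne {G : SimpleGraph V} (hT : G.IsTree) (r : V) {a b : V}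
    (hab : G.Adj a b) : G.dist r a ≠ G.dist r b := by
  intro heq
  obtain ⟨p, hp, hplen⟩ := hT.isConnected.exists_path_of_dist r a
  have hbp : b ∉ p.support := by
    intro hbp
    have h1 : (p.takeUntil b hbp).length + (p.dropUntil b hbp).length = p.length := by
      rw [← Walk.length_append, Walk.take_spec]
    have h2 : (p.dropUntil b hbp).length ≠ 0 := fun h0 =>
      hab.ne' (Walk.eq_of_length_eq_zero h0)
    have h3 : G.dist r b ≤ (p.takeUntil b hbp).length := SimpleGraph.dist_le _
    omega
  obtain ⟨q, hq, hqlen⟩ := hT.isConnected.exists_path_of_dist r b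
  have heqp := hT.IsAcyclic.path_unique ⟨p.concat hab, isPath_concat hp hab hbp⟩ ⟨q, hq⟩
  have hval : p.concat hab = q := congrArg Subtype.val heqp
  have hlen : (p.concat hab).length = q.length := by rw [hval]
  rw [Walk.length_concat, hplen, hqlen] at hlen
  omega

/-- In a connected graph, distances of adjacent vertices differ by at most one. -/
lemma dist_adj_le {G : SimpleGraph V} (hc : G.Connected) (r : V) {a b : V}
    (hab : G.Adj a b) : G.dist r b ≤ G.dist r a + 1 := by
  have h1 := hc.dist_triangle (u := r) (v := a) (w := b)
  rwa [SimpleGraph.dist_eq_one_iff_adj.mpr hab] at h1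

/-- In a tree, the neighbour on the root side is unique. -/
lemma tree_parent_unique {G : SimpleGraph V} (hT : G.IsTree) (r : V) {a b v : V}
    (hav : G.Adj a v) (hbv : G.Adj b v)
    (hda : G.dist r a < G.dist r v) (hdb : G.dist r b < G.dist r v) : a = b := by
  obtain ⟨p, hp, hplen⟩ := hT.isConnected.exists_path_of_dist r a
  obtain ⟨q, hq, hqlen⟩ := hT.isConnected.exists_path_of_dist r b
  have hvp : v ∉ p.support := fun hv => by
    have := dist_le_of_mem_support p hv; omega
  have hvq : v ∉ q.support := fun hv => by
    have := dist_le_of_mem_support q hv; omega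
  have heqp := hT.IsAcyclic.path_unique ⟨p.concat hav, isPath_concat hp hav hvp⟩
    ⟨q.concat hbv, isPath_concat hq hbv hvq⟩
  have hval : p.concat hav = q.concat hbv := congrArg Subtype.val heqp
  obtain ⟨h1, -⟩ := Walk.concat_inj hval
  exact h1

end aux


theorem core_subset_neighbors_supp {V : Type*} [Fintype V] (G : SimpleGraph V) (hT : G.IsTree)
    (C : Set V) (hC : C ⊆ core G) (hne : C.Nonempty) :
    C.ncard < ((⋃ c ∈ C, G.neighborSet c) ∩ nullSupp G).ncard := by
  classical
  obtain ⟨x, hx0, hxfull⟩ := exists_full_null G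
  set S : Set V := (⋃ c ∈ C, G.neighborSet c) ∩ nullSupp G with hSdef
  have core_mem : ∀ c ∈ C, ∃ v, v ∈ nullSupp G ∧ G.Adj v c := by
    intro c hc
    have hc2 := hC hc
    rw [core, Set.mem_iUnion₂] at hc2
    obtain ⟨v, hv, hcv⟩ := hc2
    exact ⟨v, hv, hcv⟩
  have hdisj : ∀ c ∈ C, c ∉ S := by
    intro c hc hcS
    obtain ⟨v, hv, hvc⟩ := core_mem c hc
    exact null_indep hT.IsAcyclic hx0 hvc (hxfull v hv) (hxfull c hcS.2)
  have two : ∀ c : V, ∃ s t : V, c ∈ C →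
      s ≠ t ∧ s ∈ S ∧ t ∈ S ∧ G.Adj c s ∧ G.Adj c t := by
    intro c
    by_cases hc : c ∈ C
    · obtain ⟨v, hvSupp, hvc⟩ := core_mem c hc
      have hvS : v ∈ S := ⟨Set.mem_biUnion hc hvc.symm, hvSupp⟩
      have hsum : ∑ z ∈ G.neighborFinset c, x z = 0 := by
        have h := congrFun hx0 c
        rwa [SimpleGraph.adjMatrix_mulVec_apply, Pi.zero_apply] at h
      have hxv : x v ≠ 0 := hxfull v hvSupp
      have hvN : v ∈ G.neighborFinset c := by
        rw [SimpleGraph.mem_neighborFinset]; exact hvc.symm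
      have hex : ∃ t ∈ G.neighborFinset c, t ≠ v ∧ x t ≠ 0 := by
        by_contra hcon
        push_neg at hcon
        rw [Finset.sum_eq_single_of_mem v hvN (fun z hz hne => hcon z hz hne)] at hsum
        exact hxv hsum
      obtain ⟨t, htN, htv, hxt⟩ := hex
      have hct : G.Adj c t := (SimpleGraph.mem_neighborFinset (G := G) c t).mp htN
      have htS : t ∈ S := ⟨Set.mem_biUnion hc hct, ⟨x, hx0, hxt⟩⟩
      exact ⟨v, t, fun _ => ⟨Ne.symm htv, hvS, htS, hvc.symm, hct⟩⟩
    · exact ⟨c, c, fun h => absurd h hc⟩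
  choose s1 s2 htwo using two
  have hCfin : C.Finite := Set.toFinite C
  have hSfin : S.Finite := Set.toFinite S
  obtain ⟨r⟩ := hT.isConnected.nonempty
  set EF : Finset (Sym2 V) := G.edgeFinset.filter
    (fun e => ∃ c ∈ C, ∃ s ∈ S, e = s(c, s)) with hEFdef
  -- lower bound on the number of C–S edges
  have lower : 2 * hCfin.toFinset.card ≤ EF.card := by
    have hcard : (hCfin.toFinset ×ˢ (Finset.univ : Finset Bool)).card
        = 2 * hCfin.toFinset.card := by
      rw [Finset.card_product, Finset.card_univ, Fintype.card_bool, mul_comm]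
    rw [← hcard]
    apply Finset.card_le_card_of_injOn
      (fun cb => if cb.2 then s(cb.1, s1 cb.1) else s(cb.1, s2 cb.1))
    · rintro ⟨c, b⟩ hmem
      rw [Finset.mem_coe, Finset.mem_product] at hmem
      have hc : c ∈ C := hCfin.mem_toFinset.mp hmem.1
      obtain ⟨hne12, hs1, hs2, ha1, ha2⟩ := htwo c hc
      rw [hEFdef, Finset.mem_coe, Finset.mem_filter]
      cases b with
      | true =>
        simp only [ite_true]
        exact ⟨by simp only [SimpleGraph.mem_edgeFinset, SimpleGraph.mem_edgeSet]; exact ha1,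
          ⟨c, hc, s1 c, hs1, rfl⟩⟩
      | false =>
        simp only [ite_false]
        exact ⟨by simp only [SimpleGraph.mem_edgeFinset, SimpleGraph.mem_edgeSet]; exact ha2,
          ⟨c, hc, s2 c, hs2, rfl⟩⟩
    · rintro ⟨c, b⟩ hm ⟨c', b'⟩ hm' heq
      rw [Finset.mem_coe, Finset.mem_product] at hm hm'
      have hc : c ∈ C := hCfin.mem_toFinset.mp hm.1
      have hc' : c' ∈ C := hCfin.mem_toFinset.mp hm'.1
      obtain ⟨hne12, hs1, hs2, ha1, ha2⟩ := htwo c hc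
      obtain ⟨hne12', hs1', hs2', ha1', ha2'⟩ := htwo c' hc'
      have hcc : c = c' ∧ (if b then s1 c else s2 c) = (if b' then s1 c' else s2 c') := by
        have heq2 : s(c, if b then s1 c else s2 c) = s(c', if b' then s1 c' else s2 c') := by
          cases b <;> cases b' <;> simpa using heq
        rcases Sym2.eq_iff.mp heq2 with ⟨h1, h2⟩ | ⟨h1, h2⟩
        · exact ⟨h1, h2⟩
        · exfalso
          apply hdisj c hc
          rw [h1]
          cases b' with
          | true => simpa using hs1'
          | false => simpa using hs2'
      obtain ⟨rfl, h2⟩ := hcc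
      have hbb : b = b' := by
        cases b <;> cases b' <;>
          first
            | rfl
            | (exfalso
               simp only [ite_true, ite_false] at h2
               first
                 | exact hne12 h2
                 | exact hne12 h2.symm)
      rw [hbb]
  -- selection of endpoints for edges of EF
  have sel : ∀ e : Sym2 V, ∃ c s : V, e ∈ EF → c ∈ C ∧ s ∈ S ∧ e = s(c, s) := by
    intro e
    by_cases he : e ∈ EF
    · rw [hEFdef, Finset.mem_filter] at he
      obtain ⟨-, c, hc, s, hs, hcs⟩ := he
      exact ⟨c, s, fun _ => ⟨hc, hs, hcs⟩⟩
    · exact ⟨r, r, fun h => absurd h he⟩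
  choose ce se hsel using sel
  have hadj : ∀ e ∈ EF, G.Adj (ce e) (se e) := by
    intro e he
    obtain ⟨hc, hs, hcs⟩ := hsel e he
    have hE : e ∈ G.edgeSet := by
      rw [hEFdef, Finset.mem_filter] at he
      exact SimpleGraph.mem_edgeFinset.mp he.1
    rw [hcs, SimpleGraph.mem_edgeSet] at hE
    exact hE
  have hchild : ∀ e ∈ EF,
      G.Adj (if G.dist r (ce e) < G.dist r (se e) then ce e else se e)
            (if G.dist r (ce e) < G.dist r (se e) then se e else ce e) ∧
      (if G.dist r (ce e) < G.dist r (se e) then ce e else se e) ∈ C ∪ S ∧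
      (if G.dist r (ce e) < G.dist r (se e) then se e else ce e) ∈ C ∪ S ∧
      G.dist r (if G.dist r (ce e) < G.dist r (se e) then ce e else se e) <
        G.dist r (if G.dist r (ce e) < G.dist r (se e) then se e else ce e) ∧
      e = s(if G.dist r (ce e) < G.dist r (se e) then ce e else se e,
            if G.dist r (ce e) < G.dist r (se e) then se e else ce e) := by
    intro e he
    obtain ⟨hc, hs, hcs⟩ := hsel e he
    have hA := hadj e he
    have hnedist := tree_adj_dist_ne hT r hA
    by_cases hlt : G.dist r (ce e) < G.dist r (se e)
    · simp only [if_pos hlt]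
      exact ⟨hA, Or.inl hc, Or.inr hs, hlt, hcs⟩
    · have hlt' : G.dist r (se e) < G.dist r (ce e) :=
        lt_of_le_of_ne (not_lt.mp hlt) (fun h => hnedist h.symm)
      simp only [if_neg hlt]
      refine ⟨hA.symm, Or.inr hs, Or.inl hc, hlt', ?_⟩
      rw [Sym2.eq_swap]
      exact hcs
  have memU : ∀ w, w ∈ C ∪ S → w ∈ hCfin.toFinset ∪ hSfin.toFinset := by
    intro w hw
    rw [Finset.mem_union]
    rcases hw with hw | hw
    · exact Or.inl (hCfin.mem_toFinset.mpr hw)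
    · exact Or.inr (hSfin.mem_toFinset.mpr hw)
  have hUne : (hCfin.toFinset ∪ hSfin.toFinset).Nonempty := by
    obtain ⟨c, hc⟩ := hne
    exact ⟨c, memU c (Or.inl hc)⟩
  obtain ⟨m, hmU, hmmin⟩ :=
    Finset.exists_min_image (hCfin.toFinset ∪ hSfin.toFinset) (fun v => G.dist r v) hUne
  have upper : EF.card ≤ (hCfin.toFinset ∪ hSfin.toFinset).card - 1 := by
    have h1 : EF.card ≤ ((hCfin.toFinset ∪ hSfin.toFinset).erase m).card := by
      apply Finset.card_le_card_of_injOn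
        (fun e => if G.dist r (ce e) < G.dist r (se e) then se e else ce e)
      · intro e he
        obtain ⟨hA, hpU, hcU, hlt, hdecomp⟩ := hchild e he
        rw [Finset.mem_coe, Finset.mem_erase]
        refine ⟨?_, memU _ hcU⟩
        intro hcm
        simp only at hcm
        have hmin := hmmin _ (memU _ hpU)
        rw [← hcm] at hmin
        omega
      · intro e he e' he' heq
        rw [Finset.mem_coe] at he he'
        obtain ⟨hA, hpU, hcU, hlt, hdec⟩ := hchild e he
        obtain ⟨hA', hpU', hcU', hlt', hdec'⟩ := hchild e' he'
        simp only at heq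
        have hpar :
            (if G.dist r (ce e) < G.dist r (se e) then ce e else se e) =
            (if G.dist r (ce e') < G.dist r (se e') then ce e' else se e') := by
          apply tree_parent_unique hT r (v := if G.dist r (ce e') < G.dist r (se e')
            then se e' else ce e')
          · rw [← heq]; exact hA
          · exact hA'
          · rw [← heq]; exact hlt
          · exact hlt'
        rw [hdec, hdec', hpar, heq]
    have hm1 : 1 ≤ (hCfin.toFinset ∪ hSfin.toFinset).card :=
      Finset.card_pos.mpr hUne
    rw [Finset.card_erase_of_mem hmU] at h1
    exact h1
  have hdisjF : Disjoint hCfin.toFinset hSfin.toFinset := by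
    rw [Finset.disjoint_left]
    intro a haC haS
    exact hdisj a (hCfin.mem_toFinset.mp haC) (hSfin.mem_toFinset.mp haS)
  have hunion : (hCfin.toFinset ∪ hSfin.toFinset).card
      = hCfin.toFinset.card + hSfin.toFinset.card :=
    Finset.card_union_of_disjoint hdisjF
  have hCpos : 0 < hCfin.toFinset.card := by
    apply Finset.card_pos.mpr
    obtain ⟨c, hc⟩ := hne
    exact ⟨c, hCfin.mem_toFinset.mpr hc⟩
  have hCcard : C.ncard = hCfin.toFinset.card := Set.ncard_eq_toFinset_card C hCfin
  have hScard : S.ncard = hSfin.toFinset.card := Set.ncard_eq_toFinset_card S hSfin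
  rw [hCcard, hScard]
  omega
end

section
/- Let G be a unicyclic graph with cycle C, let v ∈ V(C) with v ∈ Supp(G{v}), and let u be a neighbor of v inside the pendant tree G{v}. Then u ∉ Supp(G{v} − v); in particular u is not in the support of the forest G − C. -/
open SimpleGraph Matrix

attribute [local instance] Classical.propDecidable

namespace NbAux

variable {V : Type*} {W : Type*}



/-- Build a walk following `f` from index `i`, of length `k`. -/
def walkOf (H : SimpleGraph W) (f : ℕ → W) (hadj : ∀ n, H.Adj (f n) (f (n+1))) :
    (k i : ℕ) → H.Walk (f i) (f (i+k))
  | 0, _ => SimpleGraph.Walk.nil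
  | (k+1), i => (walkOf H f hadj k i).concat (hadj (i+k))

lemma support_walkOf (H : SimpleGraph W) (f : ℕ → W) (hadj : ∀ n, H.Adj (f n) (f (n+1))) :
    ∀ k i, (walkOf H f hadj k i).support = (List.range (k+1)).map (fun t => f (i+t)) := by
  intro k
  induction k with
  | zero => intro i; simp [walkOf, List.range_succ]
  | succ k ih =>
    intro i
    rw [walkOf, SimpleGraph.Walk.support_concat, ih i]
    rw [List.range_succ (n := k+1), List.map_append]
    simp

lemma length_walkOf (H : SimpleGraph W) (f : ℕ → W) (hadj : ∀ n, H.Adj (f n) (f (n+1))) :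
    ∀ k i, (walkOf H f hadj k i).length = k := by
  intro k
  induction k with
  | zero => intro i; rfl
  | succ k ih => intro i; rw [walkOf, SimpleGraph.Walk.length_concat, ih i]

/-- An acyclic graph on a finite type admits no infinite non-backtracking walk. -/
lemma no_nb_walk [Finite W] {H : SimpleGraph W} (hH : H.IsAcyclic)
    (f : ℕ → W) (hadj : ∀ n, H.Adj (f n) (f (n+1))) (hnb : ∀ n, f (n+2) ≠ f n) : False := by
  obtain ⟨i, j, hij, hfeq⟩ := Finite.exists_ne_map_eq_of_infinite f
  -- the set of positive gaps with a repetition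
  have hne : ∃ d, 0 < d ∧ ∃ i, f (i + d) = f i := by
    rcases Nat.lt_or_ge i j with h | h
    · exact ⟨j - i, by omega, i, by rw [show i + (j-i) = j by omega, hfeq]⟩
    · have : i ≠ j := hij
      exact ⟨i - j, by omega, j, by rw [show j + (i-j) = i by omega, hfeq]⟩
  classical
  set d0 := Nat.find hne with hd0
  obtain ⟨hd0pos, i0, hi0⟩ := Nat.find_spec hne
  rw [← hd0] at hd0pos hi0
  have hmin : ∀ d, 0 < d → d < d0 → ∀ m, f (m + d) ≠ f m := by
    intro d hd hdlt m hm
    exact Nat.find_min hne hdlt ⟨hd, m, hm⟩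
  have hd1 : d0 ≠ 1 := by
    intro h
    rw [h] at hi0
    exact (hadj i0).ne' hi0
  have hd2 : d0 ≠ 2 := by
    intro h
    rw [h] at hi0
    exact hnb i0 hi0
  have hd3 : 3 ≤ d0 := by omega
  -- windows of size < d0 are injective
  have hwin : ∀ m a b, a < b → b - a < d0 → f (m + a) ≠ f (m + b) := by
    intro m a b hab hlt heq
    exact hmin (b - a) (by omega) hlt (m + a) (by rw [show m + a + (b-a) = m + b by omega]; exact heq.symm)
  -- path 2: the long path
  have hlong : i0 + 1 + (d0 - 1) = i0 + d0 := by omega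
  let P2 : H.Walk (f (i0+1)) (f (i0+d0)) :=
    (walkOf H f hadj (d0-1) (i0+1)).copy rfl (congrArg f hlong)
  have hP2 : P2.IsPath := by
    rw [SimpleGraph.Walk.isPath_def]
    show ((walkOf H f hadj (d0-1) (i0+1)).copy rfl (congrArg f hlong)).support.Nodup
    rw [SimpleGraph.Walk.support_copy, support_walkOf]
    refine List.Nodup.map_on ?_ List.nodup_range
    intro s hs t ht hst
    simp only [List.mem_range] at hs ht
    by_contra hne2
    rcases Nat.lt_or_ge s t with h | h
    · exact hwin (i0+1) s t h (by omega) hst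
    · exact hwin (i0+1) t s (by omega) (by omega) hst.symm
  -- path 1: the single edge
  let P1 : H.Walk (f (i0+1)) (f (i0+d0)) :=
    (SimpleGraph.Walk.cons (hadj i0).symm SimpleGraph.Walk.nil).copy rfl hi0.symm
  have hP1 : P1.IsPath := by
    rw [SimpleGraph.Walk.isPath_def]
    show ((SimpleGraph.Walk.cons (hadj i0).symm SimpleGraph.Walk.nil).copy rfl hi0.symm).support.Nodup
    rw [SimpleGraph.Walk.support_copy]
    simp only [SimpleGraph.Walk.support_cons, SimpleGraph.Walk.support_nil]
    simp [(hadj i0).ne']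
  have := hH.path_unique ⟨P1, hP1⟩ ⟨P2, hP2⟩
  have hlen : P1.length = P2.length := congrArg SimpleGraph.Walk.length (congrArg Subtype.val this)
  have h1 : P1.length = 1 := by
    show ((SimpleGraph.Walk.cons (hadj i0).symm SimpleGraph.Walk.nil).copy rfl hi0.symm).length = 1
    rw [SimpleGraph.Walk.length_copy]; rfl
  have h2 : P2.length = d0 - 1 := by
    show ((walkOf H f hadj (d0-1) (i0+1)).copy rfl (congrArg f hlong)).length = d0 - 1
    rw [SimpleGraph.Walk.length_copy, length_walkOf]
  omega




lemma kernel_step [Fintype W] {H : SimpleGraph W} {s : W → ℝ}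
    (hs : H.adjMatrix ℝ *ᵥ s = 0) {p q : W} (hadj : H.Adj p q) (hp : s p ≠ 0) :
    ∃ r, H.Adj q r ∧ r ≠ p ∧ s r * s p < 0 := by
  by_contra hcon
  push_neg at hcon
  have h0 : ∑ r ∈ H.neighborFinset q, s r = 0 := by
    have := congrFun hs q
    rwa [SimpleGraph.adjMatrix_mulVec_apply, Pi.zero_apply] at this
  have hps : p ∈ H.neighborFinset q := by
    rw [SimpleGraph.mem_neighborFinset]; exact hadj.symm
  have hpos : (0:ℝ) < ∑ r ∈ H.neighborFinset q, s r * s p := by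
    rw [← Finset.add_sum_erase _ _ hps]
    have h1 : 0 < s p * s p := mul_self_pos.mpr hp
    have h2 : 0 ≤ ∑ r ∈ (H.neighborFinset q).erase p, s r * s p := by
      refine Finset.sum_nonneg ?_
      intro r hr
      have hr1 := Finset.mem_of_mem_erase hr
      rw [SimpleGraph.mem_neighborFinset] at hr1
      exact hcon r hr1 (Finset.ne_of_mem_erase hr)
    linarith
  rw [← Finset.sum_mul, h0, zero_mul] at hpos
  exact lt_irrefl 0 hpos

lemma supp_indep [Fintype W] {H : SimpleGraph W} (hH : H.IsAcyclic)
    {a b : W} (hab : H.Adj a b) {x y : W → ℝ}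
    (hx : H.adjMatrix ℝ *ᵥ x = 0) (hy : H.adjMatrix ℝ *ᵥ y = 0)
    (hxa : x a ≠ 0) (hyb : y b ≠ 0) : False := by
  -- choose ε so that s = x + ε y is nonzero at both a and b
  obtain ⟨ε, hε⟩ : ∃ ε : ℝ, x a + ε * y a ≠ 0 ∧ x b + ε * y b ≠ 0 := by
    have hbad : ({ε : ℝ | x a + ε * y a = 0} ∪ {ε | x b + ε * y b = 0}).Finite := by
      apply Set.Finite.union
      · rcases eq_or_ne (y a) 0 with h | h
        · have : {ε : ℝ | x a + ε * y a = 0} = ∅ := by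
            ext ε; simp [h, hxa]
          rw [this]; exact Set.finite_empty
        · apply Set.Finite.subset (Set.finite_singleton (-(x a) / y a))
          intro ε hε
          simp only [Set.mem_setOf_eq] at hε
          simp only [Set.mem_singleton_iff]
          field_simp
          linarith
      · apply Set.Finite.subset (Set.finite_singleton (-(x b) / y b))
        intro ε hε
        simp only [Set.mem_setOf_eq] at hε
        simp only [Set.mem_singleton_iff]
        field_simp
        linarith
    obtain ⟨ε, hε⟩ := (hbad.infinite_compl).nonempty
    simp only [Set.mem_compl_iff, Set.mem_union, Set.mem_setOf_eq, not_or] at hε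
    exact ⟨ε, hε⟩
  set s : W → ℝ := x + ε • y with hsdef
  have hs : H.adjMatrix ℝ *ᵥ s = 0 := by
    rw [hsdef, Matrix.mulVec_add, Matrix.mulVec_smul, hx, hy]
    simp
  have hsa : s a ≠ 0 := by simpa [hsdef] using hε.1
  have hsb : s b ≠ 0 := by simpa [hsdef] using hε.2
  -- build the infinite non-backtracking walk
  let T := {pq : W × W // H.Adj pq.1 pq.2 ∧ s pq.1 ≠ 0 ∧ s pq.2 ≠ 0}
  have step : ∀ pq : T, ∃ pq' : T, pq'.1.1 = pq.1.2 ∧ pq'.1.2 ≠ pq.1.1 := by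
    rintro ⟨⟨p, q⟩, h1, h2, h3⟩
    obtain ⟨r, hr1, hr2, hr3⟩ := kernel_step hs h1 h2
    refine ⟨⟨(q, r), hr1, h3, ?_⟩, rfl, hr2⟩
    intro h0
    rw [h0, zero_mul] at hr3
    exact lt_irrefl 0 hr3
  let g : ℕ → T := fun n => Nat.rec ⟨(a, b), hab, hsa, hsb⟩ (fun _ pq => Classical.choose (step pq)) n
  have hg : ∀ n, g (n+1) = Classical.choose (step (g n)) := fun n => rfl
  have hg1 : ∀ n, (g (n+1)).1.1 = (g n).1.2 := by
    intro n; rw [hg n]; exact (Classical.choose_spec (step (g n))).1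
  have hg2 : ∀ n, (g (n+1)).1.2 ≠ (g n).1.1 := by
    intro n; rw [hg n]; exact (Classical.choose_spec (step (g n))).2
  let f : ℕ → W := fun n => (g n).1.1
  have hadjf : ∀ n, H.Adj (f n) (f (n+1)) := by
    intro n
    show H.Adj (g n).1.1 (g (n+1)).1.1
    rw [hg1 n]
    exact (g n).2.1
  have hnb : ∀ n, f (n+2) ≠ f n := by
    intro n
    show (g (n+2)).1.1 ≠ (g n).1.1
    rw [hg1 (n+1)]
    exact hg2 n
  exact no_nb_walk hH f hadjf hnb



lemma induce_mulVec_apply (G : SimpleGraph V) (S : Set V) [Fintype ↥S]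
    (x : ↥S → ℝ) (i : ↥S) :
    ((G.induce S).adjMatrix ℝ *ᵥ x) i = ∑ j : ↥S, if G.Adj ↑i ↑j then x j else 0 := by
  rw [Matrix.mulVec]
  simp only [dotProduct, SimpleGraph.adjMatrix_apply, ite_mul, one_mul, zero_mul]
  refine Finset.sum_congr rfl ?_
  intro j _
  congr 1

lemma sum_subtype_eq [Fintype V] (S : Set V) [Fintype ↥S] (f : V → ℝ)
    (hf : ∀ w, w ∉ S → f w = 0) :
    ∑ j : ↥S, f ↑j = ∑ w : V, f w := by
  rw [← Finset.sum_subtype S.toFinset (fun x => Set.mem_toFinset) f]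
  exact Finset.sum_subset (Finset.subset_univ _)
    (fun w _ hw => hf w (fun hS => hw (Set.mem_toFinset.mpr hS)))

lemma kernel_restrict [Fintype V] (G : SimpleGraph V) {S T : Set V} [Fintype ↥S] [Fintype ↥T]
    (hST : S ⊆ T)
    (hcl : ∀ a ∈ S, ∀ b ∈ T, G.Adj a b → b ∈ S)
    {y : ↥T → ℝ} (hy : (G.induce T).adjMatrix ℝ *ᵥ y = 0) :
    (G.induce S).adjMatrix ℝ *ᵥ (fun i : ↥S => y ⟨↑i, hST i.2⟩) = 0 := by
  funext i
  have h0 := congrFun hy ⟨↑i, hST i.2⟩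
  rw [induce_mulVec_apply, Pi.zero_apply] at h0
  rw [induce_mulVec_apply, Pi.zero_apply]
  set f : V → ℝ := fun w => if h : w ∈ T then (if G.Adj ↑i w then y ⟨w, h⟩ else 0) else 0 with hfdef
  have e1 : ∑ j : ↥S, (if G.Adj ↑i ↑j then y ⟨↑j, hST j.2⟩ else 0) = ∑ j : ↥S, f ↑j := by
    refine Finset.sum_congr rfl fun j _ => ?_
    rw [hfdef]
    simp only [hST j.2, dif_pos]
  have e2 : ∑ j : ↥T, (if G.Adj (↑i : V) ↑j then y j else 0) = ∑ j : ↥T, f ↑j := by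
    refine Finset.sum_congr rfl fun j _ => ?_
    rw [hfdef]
    simp only [j.2, dif_pos]
  have e3 : ∑ j : ↥S, f ↑j = ∑ w : V, f w := by
    refine sum_subtype_eq S f fun w hw => ?_
    rw [hfdef]
    by_cases hT : w ∈ T
    · simp only [hT, dif_pos]
      have : ¬ G.Adj ↑i w := fun hA => hw (hcl ↑i i.2 w hT hA)
      simp [this]
    · simp [hT]
  have e4 : ∑ j : ↥T, f ↑j = ∑ w : V, f w := by
    refine sum_subtype_eq T f fun w hw => ?_
    rw [hfdef]; simp [hw]
  rw [e1, e3, ← e4, ← e2, h0]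

lemma kernel_extend [Fintype V] (G : SimpleGraph V) {T : Set V} {v : V}
    [Fintype ↥T] [Fintype ↥(T \ {v} : Set V)] (hv : v ∈ T)
    {x : ↥T → ℝ} (hx : (G.induce T).adjMatrix ℝ *ᵥ x = 0) (hxv : x ⟨v, hv⟩ ≠ 0)
    {y : ↥(T \ {v} : Set V) → ℝ} (hy : (G.induce (T \ {v})).adjMatrix ℝ *ᵥ y = 0) :
    ∃ z : ↥T → ℝ, (G.induce T).adjMatrix ℝ *ᵥ z = 0 ∧
      (∀ (w : V) (hw : w ∈ T \ {v}), z ⟨w, hw.1⟩ = y ⟨w, hw⟩) ∧ z ⟨v, hv⟩ = 0 := by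
  set z : ↥T → ℝ := fun t => if h : (↑t : V) ∈ T \ {v} then y ⟨↑t, h⟩ else 0 with hzdef
  have hzv : z ⟨v, hv⟩ = 0 := by
    rw [hzdef]
    simp
  have hagree : ∀ (w : V) (hw : w ∈ T \ {v}), z ⟨w, hw.1⟩ = y ⟨w, hw⟩ := by
    intro w hw
    rw [hzdef]
    simp only [hw, dif_pos]
  have hrow : ∀ i : ↥T, (↑i : V) ≠ v → ((G.induce T).adjMatrix ℝ *ᵥ z) i = 0 := by
    intro i hiv
    have hiS : (↑i : V) ∈ T \ {v} := ⟨i.2, hiv⟩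
    rw [induce_mulVec_apply]
    set f : V → ℝ := fun w =>
      if h : w ∈ T \ {v} then (if G.Adj ↑i w then y ⟨w, h⟩ else 0) else 0 with hfdef
    have e1 : ∑ j : ↥T, (if G.Adj (↑i : V) ↑j then z j else 0) = ∑ j : ↥T, f ↑j := by
      refine Finset.sum_congr rfl fun j _ => ?_
      rw [hfdef, hzdef]
      by_cases hjS : (↑j : V) ∈ T \ {v}
      · simp only [hjS, dif_pos]
      · simp [hjS]
    have e2 : ∑ j : ↥T, f ↑j = ∑ w : V, f w := by
      refine sum_subtype_eq T f fun w hw => ?_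
      rw [hfdef]
      have : w ∉ T \ {v} := fun h => hw h.1
      simp [this]
    have e3 : ∑ j : ↥(T \ {v} : Set V), f ↑j = ∑ w : V, f w := by
      refine sum_subtype_eq (T \ {v}) f fun w hw => ?_
      rw [hfdef]; simp [hw]
    have e4 : ∑ j : ↥(T \ {v} : Set V), f ↑j =
        ((G.induce (T \ {v})).adjMatrix ℝ *ᵥ y) ⟨↑i, hiS⟩ := by
      rw [induce_mulVec_apply]
      refine Finset.sum_congr rfl fun j _ => ?_
      rw [hfdef]
      simp only [j.2, dif_pos]
    rw [e1, e2, ← e3, e4, hy, Pi.zero_apply]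
  have hxrow : x ⬝ᵥ ((G.induce T).adjMatrix ℝ *ᵥ z) = 0 := by
    rw [Matrix.dotProduct_mulVec]
    have hsym : Matrix.vecMul x ((G.induce T).adjMatrix ℝ) = (G.induce T).adjMatrix ℝ *ᵥ x := by
      nth_rewrite 1 [← SimpleGraph.transpose_adjMatrix]
      rw [Matrix.vecMul_transpose]
    rw [hsym, hx]
    simp [dotProduct]
  have hdot : x ⬝ᵥ ((G.induce T).adjMatrix ℝ *ᵥ z) =
      x ⟨v, hv⟩ * ((G.induce T).adjMatrix ℝ *ᵥ z) ⟨v, hv⟩ := by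
    rw [dotProduct]
    rw [Finset.sum_eq_single (⟨v, hv⟩ : ↥T)]
    · intro j _ hj
      have : (↑j : V) ≠ v := fun h => hj (Subtype.ext h)
      rw [hrow j this, mul_zero]
    · intro h; exact absurd (Finset.mem_univ _) h
  have hrowv : ((G.induce T).adjMatrix ℝ *ᵥ z) ⟨v, hv⟩ = 0 := by
    have := hdot.symm.trans hxrow
    exact (mul_eq_zero.mp this).resolve_left hxv
  refine ⟨z, ?_, hagree, hzv⟩
  funext i
  rw [Pi.zero_apply]
  by_cases hiv : (↑i : V) = v
  · have : i = ⟨v, hv⟩ := Subtype.ext hiv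
    rw [this]; exact hrowv
  · exact hrow i hiv



lemma exists_closer {G : SimpleGraph V} (hconn : G.Connected) {w v : V} (hwv : w ≠ v) :
    ∃ w', G.Adj w w' ∧ G.dist w' v + 1 = G.dist w v := by
  obtain ⟨p, hp⟩ := hconn.exists_walk_length_eq_dist w v
  have hpos : 0 < G.dist w v := hconn.pos_dist_of_ne hwv
  cases p with
  | nil => rw [← hp] at hpos; simp at hpos
  | @cons _ b _ h q =>
    refine ⟨b, h, ?_⟩
    have h1 : G.dist b v ≤ q.length := SimpleGraph.dist_le q
    have h2 : G.dist w v ≤ G.dist w b + G.dist b v := hconn.dist_triangle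
    have h3 : G.dist w b = 1 := SimpleGraph.dist_eq_one_iff_adj.mpr h
    have h4 : q.length + 1 = G.dist w v := by
      rw [← hp, SimpleGraph.Walk.length_cons]
    omega

lemma exists_last_edge {G : SimpleGraph V} {b a : V} (q : G.Walk b a) (hq : ¬q.Nil) :
    ∃ p, G.Adj p a ∧ s(p, a) ∈ q.edges := by
  induction q with
  | nil => simp at hq
  | @cons u c d h r ih =>
    cases r with
    | nil => exact ⟨u, h, by simp⟩
    | @cons _ c2 _ h2 r2 =>
      obtain ⟨p, hp1, hp2⟩ := ih (by simp)
      exact ⟨p, hp1, List.mem_cons_of_mem _ hp2⟩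

lemma unicyclic_cycles_meet [Fintype V] {G : SimpleGraph V} (hconn : G.Connected)
    (hcard : G.edgeFinset.card = Fintype.card V) (v : V)
    {w1 w2 : V} {c1 : G.Walk w1 w1} {c2 : G.Walk w2 w2}
    (hcy1 : c1.IsCycle) (hcy2 : c2.IsCycle)
    (hmeet : ∀ a, a ∈ c1.support → a ∈ c2.support → a = v) : False := by
  classical
  have hch : ∀ w : {w : V // w ≠ v}, ∃ w', G.Adj ↑w w' ∧ G.dist w' v + 1 = G.dist ↑w v :=
    fun w => exists_closer hconn w.2
  set F : {w : V // w ≠ v} → Sym2 V := fun w => s(↑w, Classical.choose (hch w)) with hF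
  have hFspec : ∀ w : {w : V // w ≠ v}, G.Adj ↑w (Classical.choose (hch w)) ∧
      G.dist (Classical.choose (hch w)) v + 1 = G.dist ↑w v := fun w => Classical.choose_spec (hch w)
  have hFinj : Function.Injective F := by
    intro t1 t2 h
    rw [hF] at h
    simp only [Sym2.eq_iff] at h
    rcases h with ⟨h1, _⟩ | ⟨h1, h2⟩
    · exact Subtype.ext h1
    · exfalso
      have d1 := (hFspec t1).2
      have d2 := (hFspec t2).2
      rw [h2] at d1
      rw [← h1] at d2
      omega
  -- every cycle contains an edge outside the image of F
  have hextra : ∀ (w0 : V) (c : G.Walk w0 w0), c.IsCycle →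
      ∃ e ∈ c.edges, e ∉ Finset.univ.image F := by
    intro w0 c hc
    obtain ⟨a, haS, hamax'⟩ := Finset.exists_max_image c.support.toFinset (fun w => G.dist w v)
      ⟨w0, by simp [SimpleGraph.Walk.start_mem_support]⟩
    have ha : a ∈ c.support := by simpa using haS
    have hamax : ∀ w ∈ c.support, G.dist w v ≤ G.dist a v := by
      intro w hw; exact hamax' w (by simpa using hw)
    set c' := c.rotate a ha with hc'def
    have hc' : c'.IsCycle := hc.rotate ha
    have hmemsup : ∀ x, x ∈ c'.support → x ∈ c.support := by
      intro x hx
      rw [SimpleGraph.Walk.support_eq_cons] at hx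
      rcases List.mem_cons.mp hx with rfl | hx
      · exact ha
      · have := (SimpleGraph.Walk.support_rotate c a ha).mem_iff.mp hx
        rw [SimpleGraph.Walk.support_eq_cons c]
        exact List.mem_cons_of_mem _ this
    have hmemedge : ∀ e, e ∈ c'.edges → e ∈ c.edges := by
      intro e he; exact (SimpleGraph.Walk.rotate_edges c a ha).mem_iff.mp he
    have hnnil : ¬c'.Nil := by
      have := hc'.three_le_length
      rw [SimpleGraph.Walk.not_nil_iff_lt_length]
      omega
    obtain ⟨b, hab, q, hc'eq⟩ := SimpleGraph.Walk.not_nil_iff.mp hnnil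
    have heb : s(a, b) ∈ c'.edges := by rw [hc'eq]; simp
    obtain ⟨p, hpa, hpq⟩ := exists_last_edge q (SimpleGraph.Walk.not_nil_of_ne hab.ne')
    have hep : s(p, a) ∈ c'.edges := by
      rw [hc'eq, SimpleGraph.Walk.edges_cons]
      exact List.mem_cons_of_mem _ hpq
    have hbp : b ≠ p := by
      intro h
      subst h
      have hnd := hc'.edges_nodup
      rw [hc'eq, SimpleGraph.Walk.edges_cons] at hnd
      refine (List.nodup_cons.mp hnd).1 ?_
      rw [Sym2.eq_swap]
      exact hpq
    have hbs : b ∈ c.support := SimpleGraph.Walk.snd_mem_support_of_mem_edges c (hmemedge _ heb)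
    have hps : p ∈ c.support := SimpleGraph.Walk.fst_mem_support_of_mem_edges c (hmemedge _ hep)
    have hav : a ≠ v := by
      intro h
      have h1 : G.dist b v ≤ G.dist a v := hamax b hbs
      rw [h, SimpleGraph.dist_self] at h1
      have : b = v := (hconn.dist_eq_zero_iff).mp (Nat.le_zero.mp h1)
      exact hab.ne' (this.trans h.symm)
    have key : ∀ w, w ∈ c.support → s(a, w) ∈ Finset.univ.image F → F ⟨a, hav⟩ = s(a, w) := by
      intro w hws hmem
      obtain ⟨t, _, ht⟩ := Finset.mem_image.mp hmem
      rw [hF] at ht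
      rw [Sym2.eq_iff] at ht
      rcases ht with ⟨h1, h2⟩ | ⟨h1, h2⟩
      · have htt : t = ⟨a, hav⟩ := Subtype.ext h1
        rw [← htt, hF]
        simp only
        rw [Sym2.eq_iff]
        exact Or.inl ⟨h1, h2⟩
      · exfalso
        have d1 : G.dist a v + 1 = G.dist w v := by
          rw [← h2, ← h1]; exact (hFspec t).2
        have := hamax w hws
        omega
    by_cases hb : s(a, b) ∈ Finset.univ.image F
    · refine ⟨s(p, a), hmemedge _ hep, ?_⟩
      intro hp
      have hp' : s(a, p) ∈ Finset.univ.image F := by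
        rw [show s(a, p) = s(p, a) from Sym2.eq_swap]; exact hp
      have e1 := key b hbs hb
      have e2 := key p hps hp'
      rw [e1] at e2
      rw [Sym2.eq_iff] at e2
      rcases e2 with ⟨_, h2⟩ | ⟨h1, _⟩
      · exact hbp h2
      · exact hpa.ne' h1
    · exact ⟨s(a, b), hmemedge _ heb, hb⟩
  obtain ⟨e1, he1c, he1⟩ := hextra _ c1 hcy1
  obtain ⟨e2, he2c, he2⟩ := hextra _ c2 hcy2
  have hne : e1 ≠ e2 := by
    intro h
    induction e1 using Sym2.ind with
    | _ a b =>
      have hadj : G.Adj a b := c1.edges_subset_edgeSet he1c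
      have ha : a = v := hmeet a (SimpleGraph.Walk.fst_mem_support_of_mem_edges c1 he1c)
        (SimpleGraph.Walk.fst_mem_support_of_mem_edges c2 (h ▸ he2c))
      have hb : b = v := hmeet b (SimpleGraph.Walk.snd_mem_support_of_mem_edges c1 he1c)
        (SimpleGraph.Walk.snd_mem_support_of_mem_edges c2 (h ▸ he2c))
      exact hadj.ne (ha.trans hb.symm)
  -- counting
  have hsub : insert e1 (insert e2 (Finset.univ.image F)) ⊆ G.edgeFinset := by
    intro e he
    simp only [Finset.mem_insert] at he
    rcases he with rfl | rfl | he
    · exact SimpleGraph.mem_edgeFinset.mpr (c1.edges_subset_edgeSet he1c)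
    · exact SimpleGraph.mem_edgeFinset.mpr (c2.edges_subset_edgeSet he2c)
    · obtain ⟨t, _, rfl⟩ := Finset.mem_image.mp he
      exact SimpleGraph.mem_edgeFinset.mpr ((hFspec t).1)
  have hcard1 : (Finset.univ.image F).card = Fintype.card V - 1 := by
    rw [Finset.card_image_of_injective _ hFinj, Finset.card_univ]
    rw [Fintype.card_subtype_compl, Fintype.card_subtype_eq]
  have hcards : (insert e1 (insert e2 (Finset.univ.image F))).card = Fintype.card V + 1 := by
    rw [Finset.card_insert_of_notMem (by simp [hne, he1]),
      Finset.card_insert_of_notMem he2, hcard1]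
    have : 1 ≤ Fintype.card V := Fintype.card_pos_iff.mpr ⟨v⟩
    omega
  have := Finset.card_le_card hsub
  rw [hcards, hcard] at this
  omega


lemma pendant_inter (G : SimpleGraph V) (C : Set V) (v : V) :
    ∀ w ∈ pendantVerts G C v, w ∈ C → w = v := by
  intro w hw hwC
  by_contra hne
  have hw' : (avoid G (C \ {v})).Reachable v w := hw
  obtain ⟨p⟩ := hw'
  have hnn : ¬p.reverse.Nil := SimpleGraph.Walk.not_nil_of_ne hne
  obtain ⟨x, hadj, q, _⟩ := SimpleGraph.Walk.not_nil_iff.mp hnn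
  exact hadj.2.1 ⟨hwC, hne⟩

lemma pendant_closed (G : SimpleGraph V) (C : Set V) (v : V) :
    ∀ a ∈ pendantVerts G C v, ∀ b, G.Adj a b → b ∉ C \ {v} → b ∈ pendantVerts G C v := by
  intro a ha b hab hb
  have haC : a ∉ C \ {v} := by
    intro h
    exact h.2 (pendant_inter G C v a ha h.1)
  have ha' : (avoid G (C \ {v})).Reachable v a := ha
  exact ha'.trans (SimpleGraph.Adj.reachable (⟨hab, haC, hb⟩ : (avoid G (C \ {v})).Adj a b))

lemma cycle_in_C [Fintype V] (G : SimpleGraph V) (C : Set V) (hC : IsCycleVerts G C) :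
    ∃ (w : ↥C) (c : (G.induce C).Walk w w), c.IsCycle := by
  by_contra h
  push_neg at h
  have hac : (G.induce C).IsAcyclic := fun w c hc => h w c hc
  have htree : (G.induce C).IsTree := ⟨hC.2.1, hac⟩
  have hedges := htree.card_edgeFinset
  have hdeg : ∑ w : ↥C, (G.induce C).degree w = 2 * (G.induce C).edgeFinset.card :=
    SimpleGraph.sum_degrees_eq_twice_card_edges _
  have hdeg2 : ∑ w : ↥C, (G.induce C).degree w = 2 * Fintype.card ↥C := by
    rw [Finset.sum_congr rfl (fun w _ => hC.2.2 w)]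
    simp [Finset.sum_const, mul_comm]
  have hpos : 0 < Fintype.card ↥C := by
    obtain ⟨w, hw⟩ := hC.1
    exact Fintype.card_pos_iff.mpr ⟨⟨w, hw⟩⟩
  omega

lemma pendant_acyclic [Fintype V] (G : SimpleGraph V) (C : Set V)
    (hG : IsUnicyclic G) (hC : IsCycleVerts G C) (v : V) (hv : v ∈ C) :
    (G.induce (pendantVerts G C v)).IsAcyclic := by
  intro w c hc
  have hinj1 : Function.Injective
      ⇑(SimpleGraph.Embedding.induce (G := G) (pendantVerts G C v)).toHom :=
    Subtype.val_injective
  set c1 := c.map (SimpleGraph.Embedding.induce (G := G) (pendantVerts G C v)).toHom with hc1def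
  have hc1 : c1.IsCycle := (SimpleGraph.Walk.map_isCycle_iff_of_injective hinj1).mpr hc
  have hsup1 : ∀ x, x ∈ c1.support → x ∈ pendantVerts G C v := by
    intro x hx
    rw [hc1def, SimpleGraph.Walk.support_map] at hx
    obtain ⟨t, _, rfl⟩ := List.mem_map.mp hx
    exact t.2
  obtain ⟨w2, c2, hc2⟩ := cycle_in_C G C hC
  have hinj2 : Function.Injective ⇑(SimpleGraph.Embedding.induce (G := G) C).toHom :=
    Subtype.val_injective
  set c2' := c2.map (SimpleGraph.Embedding.induce (G := G) C).toHom with hc2def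
  have hc2' : c2'.IsCycle := (SimpleGraph.Walk.map_isCycle_iff_of_injective hinj2).mpr hc2
  have hsup2 : ∀ x, x ∈ c2'.support → x ∈ C := by
    intro x hx
    rw [hc2def, SimpleGraph.Walk.support_map] at hx
    obtain ⟨t, _, rfl⟩ := List.mem_map.mp hx
    exact t.2
  exact unicyclic_cycles_meet hG.1 hG.2 v hc1 hc2'
    (fun a ha1 ha2 => pendant_inter G C v a (hsup1 a ha1) (hsup2 a ha2))

end NbAux
theorem neighbor_not_in_supp {V : Type*} [Fintype V] (G : SimpleGraph V) (C : Set V)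
    (hG : IsUnicyclic G) (hC : IsCycleVerts G C) (v : V) (hv : v ∈ C)
    (hvs : (⟨v, mem_pendantVerts_self G C v⟩ : pendantVerts G C v) ∈
      nullSupp (pendantTree G C v))
    (u : V) (hadj : G.Adj v u)
    (hu1 : u ∈ pendantVerts G C v \ {v}) (hu2 : u ∈ (Cᶜ : Set V)) :
    (⟨u, hu1⟩ : ↥(pendantVerts G C v \ {v})) ∉
        nullSupp (G.induce (pendantVerts G C v \ {v})) ∧
    (⟨u, hu2⟩ : ↥(Cᶜ : Set V)) ∉ nullSupp (G.induce (Cᶜ : Set V)) := by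
  classical
  have hvP : v ∈ pendantVerts G C v := mem_pendantVerts_self G C v
  have hfirst : (⟨u, hu1⟩ : ↥(pendantVerts G C v \ {v})) ∉
      nullSupp (G.induce (pendantVerts G C v \ {v})) := by
    intro hmem
    obtain ⟨y, hy, hyu⟩ := hmem
    obtain ⟨x, hx, hxv⟩ := hvs
    have hx' : (G.induce (pendantVerts G C v)).adjMatrix ℝ *ᵥ x = 0 := hx
    have hxv' : x ⟨v, hvP⟩ ≠ 0 := hxv
    obtain ⟨z, hz, hzag, hzv⟩ := NbAux.kernel_extend G hvP hx' hxv' hy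
    have hzu : z ⟨u, hu1.1⟩ ≠ 0 := by
      rw [hzag u hu1]; exact hyu
    have hadjP : (G.induce (pendantVerts G C v)).Adj ⟨v, hvP⟩ ⟨u, hu1.1⟩ := hadj
    exact NbAux.supp_indep (NbAux.pendant_acyclic G C hG hC v hv) hadjP hx' hz hxv' hzu
  refine ⟨hfirst, ?_⟩
  intro hmem2
  obtain ⟨y, hy, hyu⟩ := hmem2
  have hsub : pendantVerts G C v \ {v} ⊆ (Cᶜ : Set V) := by
    intro w hw hC'
    exact hw.2 (NbAux.pendant_inter G C v w hw.1 hC')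
  have hcl : ∀ a ∈ pendantVerts G C v \ {v}, ∀ b ∈ (Cᶜ : Set V), G.Adj a b →
      b ∈ pendantVerts G C v \ {v} := by
    intro a ha b hb hab
    refine ⟨NbAux.pendant_closed G C v a ha.1 b hab (fun h => hb h.1), ?_⟩
    intro h
    exact hb (h ▸ hv)
  have hres := NbAux.kernel_restrict G hsub hcl hy
  exact hfirst ⟨_, hres, hyu⟩
end
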